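/- arXiv:1106.1401 — 12 statements merged into one kernel-verified Lean document; each statement's English description precedes it below -/
import Mathlib

section
/- Let X ⊆ ℝ be an interval, f ∈ C¹(X), g ∈ C¹(X) monotone, with |f'(x)| ≤ |g'(x)| for all x ∈ X, and suppose the set {x ∈ X : |f'(x)| = |g'(x)|} has Lebesgue measure zero. Then |f(x) − f(y)| < |g(x) − g(y)| for all x ≠ y in X. -/
open Set MeasureTheory Function

private lemma deriv_nonneg_of_monotoneOn {g : ℝ → ℝ} {X : Set ℝ} {t : ℝ}
    (hg : MonotoneOn g X) (ht : t ∈ interior X) (hd : DifferentiableAt ℝ g t) :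
    0 ≤ deriv g t := by
  have hda : HasDerivAt g (deriv g t) t := hd.hasDerivAt
  rw [hasDerivAt_iff_tendsto_slope] at hda
  refine ge_of_tendsto hda ?_
  have hXn : X ∈ nhds t := mem_interior_iff_mem_nhds.mp ht
  have hev : ∀ᶠ s in nhdsWithin t {t}ᶜ, s ∈ X ∧ s ≠ t := by
    filter_upwards [nhdsWithin_le_nhds hXn, self_mem_nhdsWithin] with s h1 h2
    exact ⟨h1, h2⟩
  have htX : t ∈ X := interior_subset ht
  filter_upwards [hev] with s hs
  obtain ⟨hsX, hst⟩ := hs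
  rcases lt_or_gt_of_ne hst with h | h
  · have hle : g s ≤ g t := hg hsX htX h.le
    rw [slope_def_field]
    exact div_nonneg_of_nonpos (by linarith) (by linarith)
  · have hle : g t ≤ g s := hg htX hsX h.le
    rw [slope_def_field]
    exact div_nonneg (by linarith) (by linarith)

private lemma key_lemma (X : Set ℝ) (hX : X.OrdConnected) (f g : ℝ → ℝ)
    (hf : ContDiffOn ℝ 1 f X) (hg : ContDiffOn ℝ 1 g X)
    (hgmono : MonotoneOn g X)
    (hbound : ∀ x ∈ X, |deriv f x| ≤ |deriv g x|)
    (hnull : volume {x ∈ X | |deriv f x| = |deriv g x|} = 0) :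
    ∀ x ∈ X, ∀ y ∈ X, x < y → |f x - f y| < |g x - g y| := by
  intro x hx y hy hxy
  have hIcc : Icc x y ⊆ X := hX.out hx hy
  have hIooX : Ioo x y ⊆ interior X :=
    interior_maximal (Ioo_subset_Icc_self.trans hIcc) isOpen_Ioo
  have hmemX : ∀ t ∈ Ioo x y, X ∈ nhds t := fun t ht =>
    mem_interior_iff_mem_nhds.mp (hIooX ht)
  have hdf : ∀ t ∈ Ioo x y, DifferentiableAt ℝ f t := fun t ht =>
    (hf.differentiableOn one_ne_zero).differentiableAt (hmemX t ht)
  have hdg : ∀ t ∈ Ioo x y, DifferentiableAt ℝ g t := fun t ht =>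
    (hg.differentiableOn one_ne_zero).differentiableAt (hmemX t ht)
  have hconv : Convex ℝ X := convex_iff_ordConnected.mpr hX
  have hmid : (x + y) / 2 ∈ Ioo x y := ⟨by linarith, by linarith⟩
  have hU : UniqueDiffOn ℝ X := uniqueDiffOn_convex hconv ⟨_, hIooX hmid⟩
  have hcf : ContinuousOn (derivWithin f X) X :=
    hf.continuousOn_derivWithin hU le_rfl
  have hcg : ContinuousOn (derivWithin g X) X :=
    hg.continuousOn_derivWithin hU le_rfl
  have heqf : ∀ t ∈ Ioo x y, derivWithin f X t = deriv f t := fun t ht =>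
    derivWithin_of_mem_nhds (hmemX t ht)
  have heqg : ∀ t ∈ Ioo x y, derivWithin g X t = deriv g t := fun t ht =>
    derivWithin_of_mem_nhds (hmemX t ht)
  have hIf' : IntegrableOn (deriv f) (Ioo x y) :=
    (((hcf.mono hIcc).integrableOn_Icc).mono_set Ioo_subset_Icc_self).congr_fun
      heqf measurableSet_Ioo
  have hIg' : IntegrableOn (deriv g) (Ioo x y) :=
    (((hcg.mono hIcc).integrableOn_Icc).mono_set Ioo_subset_Icc_self).congr_fun
      heqg measurableSet_Ioo
  have hIf : IntervalIntegrable (deriv f) volume x y :=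
    (intervalIntegrable_iff_integrableOn_Ioo_of_le hxy.le).mpr hIf'
  have hIg : IntervalIntegrable (deriv g) volume x y :=
    (intervalIntegrable_iff_integrableOn_Ioo_of_le hxy.le).mpr hIg'
  have hFTCf : ∫ t in x..y, deriv f t = f y - f x :=
    intervalIntegral.integral_eq_sub_of_hasDeriv_right_of_le hxy.le
      (hf.continuousOn.mono hIcc)
      (fun t ht => ((hdf t ht).hasDerivAt).hasDerivWithinAt) hIf
  have hFTCg : ∫ t in x..y, deriv g t = g y - g x :=
    intervalIntegral.integral_eq_sub_of_hasDeriv_right_of_le hxy.le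
      (hg.continuousOn.mono hIcc)
      (fun t ht => ((hdg t ht).hasDerivAt).hasDerivWithinAt) hIg
  have hIfa : IntegrableOn (fun t => |deriv f t|) (Ioo x y) := hIf'.abs
  have hIga : IntegrableOn (fun t => |deriv g t|) (Ioo x y) := hIg'.abs
  set h : ℝ → ℝ := fun t => |deriv g t| - |deriv f t| with hh
  have hIh : IntegrableOn h (Ioo x y) := hIga.sub hIfa
  have h0 : 0 ≤ᵐ[volume.restrict (Ioo x y)] h := by
    filter_upwards [self_mem_ae_restrict measurableSet_Ioo] with t ht
    have : |deriv f t| ≤ |deriv g t| := hbound t (hIcc (Ioo_subset_Icc_self ht))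
    simp only [hh, Pi.zero_apply]
    linarith
  have hsupp : volume (Ioo x y \ support h) = 0 := by
    refine measure_mono_null ?_ hnull
    intro t ⟨ht, hts⟩
    have h0t : h t = 0 := notMem_support.mp hts
    refine ⟨hIcc (Ioo_subset_Icc_self ht), ?_⟩
    simp only [hh] at h0t
    linarith
  have hvol : volume (support h ∩ Ioo x y) = volume (Ioo x y) := by
    calc volume (support h ∩ Ioo x y)
        = volume (Ioo x y \ (Ioo x y \ support h)) := by
          rw [diff_diff_right_self, inter_comm]
      _ = volume (Ioo x y) := measure_diff_null hsupp
  have hpos : 0 < ∫ t in Ioo x y, h t := by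
    rw [setIntegral_pos_iff_support_of_nonneg_ae h0 hIh, hvol, Real.volume_Ioo]
    exact ENNReal.ofReal_pos.mpr (by linarith)
  have hsplit : ∫ t in Ioo x y, h t =
      (∫ t in Ioo x y, |deriv g t|) - ∫ t in Ioo x y, |deriv f t| :=
    integral_sub hIga hIfa
  have hlt : (∫ t in Ioo x y, |deriv f t|) < ∫ t in Ioo x y, |deriv g t| := by
    rw [hsplit] at hpos; linarith
  have hioof : ∫ t in x..y, |deriv f t| = ∫ t in Ioo x y, |deriv f t| := by
    rw [intervalIntegral.integral_of_le hxy.le]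
    exact (setIntegral_congr_set Ioo_ae_eq_Ioc).symm
  have hioog : ∫ t in x..y, |deriv g t| = ∫ t in Ioo x y, |deriv g t| := by
    rw [intervalIntegral.integral_of_le hxy.le]
    exact (setIntegral_congr_set Ioo_ae_eq_Ioc).symm
  have hsign : ∀ t ∈ Ioo x y, |deriv g t| = deriv g t := fun t ht =>
    abs_of_nonneg (deriv_nonneg_of_monotoneOn hgmono (hIooX ht) (hdg t ht))
  have habsg : ∫ t in Ioo x y, |deriv g t| = g y - g x := by
    rw [setIntegral_congr_fun measurableSet_Ioo hsign,
      setIntegral_congr_set Ioo_ae_eq_Ioc, ← intervalIntegral.integral_of_le hxy.le, hFTCg]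
  have hgxy : g x ≤ g y := hgmono hx hy hxy.le
  have hgoal : |g x - g y| = g y - g x := by
    rw [abs_sub_comm, abs_of_nonneg (by linarith)]
  calc |f x - f y| = |f y - f x| := abs_sub_comm _ _
    _ = |∫ t in x..y, deriv f t| := by rw [hFTCf]
    _ ≤ ∫ t in x..y, |deriv f t| :=
        intervalIntegral.abs_integral_le_integral_abs hxy.le
    _ = ∫ t in Ioo x y, |deriv f t| := hioof
    _ < ∫ t in Ioo x y, |deriv g t| := hlt
    _ = g y - g x := habsg
    _ = |g x - g y| := hgoal.symm

private lemma key_lemma' (X : Set ℝ) (hX : X.OrdConnected) (f g : ℝ → ℝ)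
    (hf : ContDiffOn ℝ 1 f X) (hg : ContDiffOn ℝ 1 g X)
    (hgmono : MonotoneOn g X ∨ AntitoneOn g X)
    (hbound : ∀ x ∈ X, |deriv f x| ≤ |deriv g x|)
    (hnull : volume {x ∈ X | |deriv f x| = |deriv g x|} = 0) :
    ∀ x ∈ X, ∀ y ∈ X, x < y → |f x - f y| < |g x - g y| := by
  rcases hgmono with hm | ha
  · exact key_lemma X hX f g hf hg hm hbound hnull
  · intro x hx y hy hxy
    have hdneg : ∀ t : ℝ, deriv (fun s => -g s) t = -deriv g t := fun t => deriv.neg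
    have hres := key_lemma X hX f (fun s => -g s) hf hg.neg ha.neg
      (fun t ht => by rw [hdneg t, abs_neg]; exact hbound t ht)
      (by
        have : {t ∈ X | |deriv f t| = |deriv (fun s => -g s) t|}
            = {t ∈ X | |deriv f t| = |deriv g t|} := by
          ext t; simp [hdneg t, abs_neg]
        rw [this]; exact hnull)
      x hx y hy hxy
    have : |(fun s => -g s) x - (fun s => -g s) y| = |g x - g y| := by
      simp only []
      rw [show -g x - -g y = -(g x - g y) by ring, abs_neg]
    rwa [this] at hres

/-- strict mean-value comparison: if `|f'| ≤ |g'|` on an interval `X`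
with `g` monotone, and equality holds only on a Lebesgue-null set, then
`|f x − f y| < |g x − g y|` for all `x ≠ y` in `X`. -/
theorem stmt_1 (X : Set ℝ) (hX : X.OrdConnected) (f g : ℝ → ℝ)
    (hf : ContDiffOn ℝ 1 f X) (hg : ContDiffOn ℝ 1 g X)
    (hgmono : MonotoneOn g X ∨ AntitoneOn g X)
    (hbound : ∀ x ∈ X, |deriv f x| ≤ |deriv g x|)
    (hnull : volume {x ∈ X | |deriv f x| = |deriv g x|} = 0) :
    ∀ x ∈ X, ∀ y ∈ X, x ≠ y → |f x - f y| < |g x - g y| := by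
  intro x hx y hy hne
  rcases lt_or_gt_of_ne hne with h | h
  · exact key_lemma' X hX f g hf hg hgmono hbound hnull x hx y hy h
  · rw [abs_sub_comm (f x), abs_sub_comm (g x)]
    exact key_lemma' X hX f g hf hg hgmono hbound hnull y hy x hx h
end

section
/- Consider the discrete-time system x(t+1) = ψ(x(t)) on ℝ₊, where ψ is induced by continuously differentiable functions f, g : ℝ₊ → ℝ₊ via g(ψ(x)) = f(x). If (i) |f'(x)| ≤ |g'(x)| for all x with equality only on a Lebesgue-null set, and (ii) g' ≥ 0 everywhere with lim_{x→∞}(f(x) − g(x)) < 0, then every trajectory is bounded and the Lyapunov function V(x) = |f(x) − g(x)| is strictly decreasing along nonequilibrium trajectories. -/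
open Set MeasureTheory Filter Topology

lemma aux_strictMono (u : ℝ → ℝ) (hc : ContinuousOn u (Set.Ici 0))
    (hd : ∀ x ∈ Set.Ioi (0:ℝ), DifferentiableAt ℝ u x)
    (hd0 : ∀ x ∈ Set.Ioi (0:ℝ), 0 ≤ deriv u x)
    (hne : volume {x : ℝ | 0 < x ∧ deriv u x = 0} = 0) :
    StrictMonoOn u (Set.Ici 0) := by
  have hmono : MonotoneOn u (Set.Ici 0) := by
    apply monotoneOn_of_deriv_nonneg (convex_Ici 0) hc
    · intro y hy; rw [interior_Ici] at hy; exact (hd y hy).differentiableWithinAt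
    · intro y hy; rw [interior_Ici] at hy; exact hd0 y hy
  intro a ha b hb hab
  rcases (hmono ha hb hab.le).lt_or_eq with h | h
  · exact h
  · exfalso
    have hconst : ∀ y ∈ Set.Ioo a b, u y = u a := by
      intro y hy
      have h1 : u a ≤ u y := hmono ha (le_trans ha hy.1.le) hy.1.le
      have h2 : u y ≤ u b := hmono (le_trans ha hy.1.le) hb hy.2.le
      linarith
    have hsub : Set.Ioo a b ⊆ {x : ℝ | 0 < x ∧ deriv u x = 0} := by
      intro y hy
      have hy0 : 0 < y := lt_of_le_of_lt ha hy.1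
      refine ⟨hy0, ?_⟩
      have hEq : u =ᶠ[𝓝 y] fun _ => u a :=
        Filter.eventuallyEq_of_mem (isOpen_Ioo.mem_nhds hy) hconst
      rw [hEq.deriv_eq]; exact deriv_const y (u a)
    have h0 := measure_mono_null hsub hne
    rw [Real.volume_Ioo, ENNReal.ofReal_eq_zero] at h0
    linarith

/-- for the implicit scalar system `g(x(t+1)) = f(x(t))` on `ℝ₊`,
under the Lyapunov conditions, every trajectory is bounded and
`V(x) = |f x − g x|` strictly decreases along nonequilibrium trajectories. -/
theorem stmt_2 (f g : ℝ → ℝ)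
    (hf : ContDiffOn ℝ 1 f (Set.Ici (0:ℝ))) (hg : ContDiffOn ℝ 1 g (Set.Ici (0:ℝ)))
    (hfpos : ∀ x ≥ (0:ℝ), 0 ≤ f x) (hgpos : ∀ x ≥ (0:ℝ), 0 ≤ g x)
    (hbound : ∀ x ≥ (0:ℝ), |deriv f x| ≤ |deriv g x|)
    (hnull : volume {x : ℝ | 0 ≤ x ∧ |deriv f x| = |deriv g x|} = 0)
    (hgmono : ∀ x ≥ (0:ℝ), 0 ≤ deriv g x)
    (hlim : ∃ L : ℝ, L < 0 ∧ Tendsto (fun x => f x - g x) atTop (𝓝 L))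
    (x : ℕ → ℝ) (hxpos : ∀ t, 0 ≤ x t)
    (htraj : ∀ t, g (x (t + 1)) = f (x t)) :
    (∃ M : ℝ, ∀ t, x t ≤ M) ∧
      (∀ t, x (t + 1) ≠ x t →
        |f (x (t + 1)) - g (x (t + 1))| < |f (x t) - g (x t)|) := by
  obtain ⟨L, hL, hlim⟩ := hlim
  have hfc : ContinuousOn f (Set.Ici 0) := hf.continuousOn
  have hgc : ContinuousOn g (Set.Ici 0) := hg.continuousOn
  have hfd : ∀ y ∈ Set.Ioi (0:ℝ), DifferentiableAt ℝ f y := by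
    intro y hy
    exact (hf.contDiffAt (Ici_mem_nhds hy)).differentiableAt one_ne_zero
  have hgd : ∀ y ∈ Set.Ioi (0:ℝ), DifferentiableAt ℝ g y := by
    intro y hy
    exact (hg.contDiffAt (Ici_mem_nhds hy)).differentiableAt one_ne_zero
  have hdb : ∀ y ∈ Set.Ioi (0:ℝ), |deriv f y| ≤ deriv g y := by
    intro y hy
    have h1 := hbound y hy.le
    rwa [abs_of_nonneg (hgmono y hy.le)] at h1
  -- g monotone
  have hgm : MonotoneOn g (Set.Ici 0) := by
    apply monotoneOn_of_deriv_nonneg (convex_Ici 0) hgc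
    · intro y hy; rw [interior_Ici] at hy; exact (hgd y hy).differentiableWithinAt
    · intro y hy; rw [interior_Ici] at hy; exact hgmono y hy.le
  -- h := g - f strictly increasing
  have hhs : StrictMonoOn (fun y => g y - f y) (Set.Ici 0) := by
    apply aux_strictMono _ (hgc.sub hfc)
    · intro y hy; exact (hgd y hy).sub (hfd y hy)
    · intro y hy
      rw [deriv_sub (hgd y hy) (hfd y hy)]
      have := hdb y hy
      have := abs_le.1 this
      linarith [this.2]
    · apply measure_mono_null _ hnull
      intro y hy
      obtain ⟨hy0, hy1⟩ := hy
      rw [deriv_sub (hgd y hy0) (hfd y hy0)] at hy1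
      have : deriv f y = deriv g y := by linarith
      exact ⟨hy0.le, by rw [this]⟩
  -- k := g + f strictly increasing
  have hks : StrictMonoOn (fun y => g y + f y) (Set.Ici 0) := by
    apply aux_strictMono _ (hgc.add hfc)
    · intro y hy; exact (hgd y hy).add (hfd y hy)
    · intro y hy
      rw [deriv_add (hgd y hy) (hfd y hy)]
      have := abs_le.1 (hdb y hy)
      linarith [this.1]
    · apply measure_mono_null _ hnull
      intro y hy
      obtain ⟨hy0, hy1⟩ := hy
      rw [deriv_add (hgd y hy0) (hfd y hy0)] at hy1
      have : deriv f y = -deriv g y := by linarith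
      exact ⟨hy0.le, by rw [this, abs_neg]⟩
  -- the strict decrease of V
  have key : ∀ t, x (t + 1) ≠ x t →
      |f (x (t + 1)) - g (x (t + 1))| < |f (x t) - g (x t)| := by
    intro t hne
    set a := x t with ha_def
    set b := x (t + 1) with hb_def
    have ha : a ∈ Set.Ici (0:ℝ) := hxpos t
    have hb : b ∈ Set.Ici (0:ℝ) := hxpos (t + 1)
    have e1 : g b = f a := htraj t
    rcases hne.lt_or_gt with hab | hab
    · -- b < a
      have h1 : g b - f b < g a - f a := hhs hb ha hab
      have h2 : g b + f b < g a + f a := hks hb ha hab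
      have hg1 : g b ≤ g a := hgm hb ha hab.le
      have hRHS : |f a - g a| = g a - g b := by
        rw [show f a - g a = g b - g a by rw [e1], abs_of_nonpos (by linarith),
          neg_sub]
      rw [hRHS, show f b - g b = f b - f a by rw [e1], abs_lt]
      constructor <;> linarith
    · -- a < b
      have h1 : g a - f a < g b - f b := hhs ha hb hab
      have h2 : g a + f a < g b + f b := hks ha hb hab
      have hg1 : g a ≤ g b := hgm ha hb hab.le
      have hRHS : |f a - g a| = g b - g a := by
        rw [show f a - g a = g b - g a by rw [e1], abs_of_nonneg (by linarith)]
      rw [hRHS, show f b - g b = f b - f a by rw [e1], abs_lt]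
      constructor <;> linarith
  refine ⟨?_, key⟩
  -- boundedness
  have htend : Tendsto (fun y => g y - f y) atTop (𝓝 (-L)) := by
    have := hlim.neg
    simpa [neg_sub] using this
  -- h y < -L for all y ≥ 0
  have hlt : ∀ y ≥ (0:ℝ), g y - f y < -L := by
    intro y hy
    by_contra hcon
    push_neg at hcon
    have hstep : g y - f y < g (y + 1) - f (y + 1) :=
      hhs hy (Set.mem_Ici.mpr (by linarith)) (by linarith)
    have hev : ∀ᶠ z in atTop, g (y + 1) - f (y + 1) ≤ g z - f z := by
      filter_upwards [eventually_ge_atTop (y + 1)] with z hz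
      rcases hz.lt_or_eq with h | h
      · exact (hhs (Set.mem_Ici.mpr (by linarith)) (Set.mem_Ici.mpr (by linarith)) h).le
      · rw [h]
    have := ge_of_tendsto htend hev
    linarith
  -- eventual lower bound for any c < -L
  have hev : ∀ c : ℝ, c < -L → ∃ N : ℝ, ∀ y ≥ N, c < g y - f y := by
    intro c hc
    have : ∀ᶠ y in atTop, c < g y - f y := htend.eventually_const_lt hc
    exact eventually_atTop.1 this
  -- V antitone
  have hVstep : ∀ t, |f (x (t + 1)) - g (x (t + 1))| ≤ |f (x t) - g (x t)| := by
    intro t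
    by_cases hne : x (t + 1) = x t
    · rw [hne]
    · exact (key t hne).le
  have hVmono : ∀ s t, s ≤ t → |f (x t) - g (x t)| ≤ |f (x s) - g (x s)| := by
    intro s t hst
    induction t with
    | zero => simp_all
    | succ n ih =>
      rcases Nat.lt_succ_iff_lt_or_eq.1 (Nat.lt_succ_of_le hst) with h | h
      · exact (hVstep n).trans (ih (Nat.lt_succ_iff.1 h))
      · rw [h]
  by_cases hcase : ∀ t, g (x t) - f (x t) ≤ L
  · obtain ⟨N, hN⟩ := hev L (by linarith)
    refine ⟨N, fun t => ?_⟩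
    by_contra hcon
    push_neg at hcon
    exact absurd (hcase t) (not_le.2 (hN (x t) hcon.le))
  · push_neg at hcase
    obtain ⟨t0, ht0⟩ := hcase
    have hVt0 : |f (x t0) - g (x t0)| < -L := by
      have h1 := hlt (x t0) (hxpos t0)
      rw [abs_lt]
      constructor <;> [linarith; linarith]
    obtain ⟨N, hN⟩ := hev _ hVt0
    have hfin : ∃ M1 : ℝ, ∀ s < t0, x s ≤ M1 := by
      clear hN hVt0 ht0
      induction t0 with
      | zero => exact ⟨0, fun s hs => absurd hs (Nat.not_lt_zero s)⟩
      | succ n ih =>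
        obtain ⟨M, hM⟩ := ih
        refine ⟨max M (x n), fun s hs => ?_⟩
        rcases Nat.lt_succ_iff_lt_or_eq.1 hs with h | h
        · exact (hM s h).trans (le_max_left _ _)
        · rw [h]; exact le_max_right _ _
    obtain ⟨M1, hM1⟩ := hfin
    refine ⟨max N M1, fun t => ?_⟩
    rcases lt_or_ge t t0 with h | h
    · exact (hM1 t h).trans (le_max_right _ _)
    · have hVt : |f (x t) - g (x t)| ≤ |f (x t0) - g (x t0)| := hVmono t0 t h
      have hht : g (x t) - f (x t) ≤ |f (x t0) - g (x t0)| := by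
        have := abs_le.1 hVt
        have h2 : -(f (x t) - g (x t)) ≤ |f (x t) - g (x t)| := neg_le_abs _
        linarith [this.2]
      by_contra hcon
      push_neg at hcon
      have := hN (x t) (le_of_lt (lt_of_le_of_lt (le_max_left N M1) hcon))
      linarith
end

section
/- Under the hypotheses of the preceding stability theorem (|f'| ≤ |g'| with equality on a null set, g nondecreasing, lim_{x→∞}(f(x) − g(x)) < 0), every trajectory of the system g(x(t+1)) = f(x(t)) converges: lim_{t→∞} V(x(t)) = 0 where V(x) = |f(x) − g(x)|, and x(t) converges to a fixed point x* satisfying f(x*) = g(x*). -/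
open Set MeasureTheory Filter Topology

lemma ftc_aux (f : ℝ → ℝ) (hf : ContDiffOn ℝ 1 f (Set.Ici (0:ℝ))) {a b : ℝ}
    (ha : 0 ≤ a) (hab : a ≤ b) :
    ∫ y in a..b, derivWithin f (Set.Ici (0:ℝ)) y = f b - f a := by
  have hIcc : Icc a b ⊆ Ici (0:ℝ) := fun y hy => le_trans ha hy.1
  have hcd : ContinuousOn (derivWithin f (Set.Ici (0:ℝ))) (Icc a b) :=
    (hf.continuousOn_derivWithin (uniqueDiffOn_Ici 0) le_rfl).mono hIcc
  have hint : IntervalIntegrable (derivWithin f (Set.Ici (0:ℝ))) volume a b := by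
    apply ContinuousOn.intervalIntegrable
    rwa [uIcc_of_le hab]
  refine intervalIntegral.integral_eq_sub_of_hasDerivAt_of_le hab
    (hf.continuousOn.mono hIcc) (fun y hy => ?_) hint
  have hy0 : (0:ℝ) < y := lt_of_le_of_lt ha hy.1
  have hmem : Ici (0:ℝ) ∈ 𝓝 y := Ici_mem_nhds hy0
  rw [derivWithin_of_mem_nhds hmem]
  exact ((hf.contDiffAt hmem).differentiableAt one_ne_zero).hasDerivAt

lemma key_strict (f g : ℝ → ℝ)
    (hf : ContDiffOn ℝ 1 f (Set.Ici (0:ℝ))) (hg : ContDiffOn ℝ 1 g (Set.Ici (0:ℝ)))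
    (hbound : ∀ x ≥ (0:ℝ), |deriv f x| ≤ |deriv g x|)
    (hnull : volume {x : ℝ | 0 ≤ x ∧ |deriv f x| = |deriv g x|} = 0)
    (hgmono : ∀ x ≥ (0:ℝ), 0 ≤ deriv g x)
    {a b : ℝ} (ha : 0 ≤ a) (hab : a < b) : |f b - f a| < g b - g a := by
  set φf := derivWithin f (Set.Ici (0:ℝ)) with hφf
  set φg := derivWithin g (Set.Ici (0:ℝ)) with hφg
  have hIcc : Icc a b ⊆ Ici (0:ℝ) := fun y hy => le_trans ha hy.1
  have heqf : ∀ y ∈ Ioc a b, φf y = deriv f y := fun y hy =>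
    derivWithin_of_mem_nhds (Ici_mem_nhds (lt_of_le_of_lt ha hy.1))
  have heqg : ∀ y ∈ Ioc a b, φg y = deriv g y := fun y hy =>
    derivWithin_of_mem_nhds (Ici_mem_nhds (lt_of_le_of_lt ha hy.1))
  have hcf : ContinuousOn φf (Icc a b) :=
    (hf.continuousOn_derivWithin (uniqueDiffOn_Ici 0) le_rfl).mono hIcc
  have hcg : ContinuousOn φg (Icc a b) :=
    (hg.continuousOn_derivWithin (uniqueDiffOn_Ici 0) le_rfl).mono hIcc
  have hintf : IntervalIntegrable φf volume a b := by
    apply ContinuousOn.intervalIntegrable; rwa [uIcc_of_le hab.le]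
  have hintg : IntervalIntegrable φg volume a b := by
    apply ContinuousOn.intervalIntegrable; rwa [uIcc_of_le hab.le]
  have hintf' : IntervalIntegrable (fun y => |φf y|) volume a b := hintf.abs
  have hintg' : IntervalIntegrable (fun y => |φg y|) volume a b := hintg.abs
  have hFf : ∫ y in a..b, φf y = f b - f a := ftc_aux f hf ha hab.le
  have hFg : ∫ y in a..b, φg y = g b - g a := ftc_aux g hg ha hab.le
  -- strict inequality of integrals of abs
  have hstrict : ∫ y in a..b, |φf y| < ∫ y in a..b, |φg y| := by
    have hψint : IntervalIntegrable (fun y => |φg y| - |φf y|) volume a b := hintg'.sub hintf'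
    have hψnonneg : ∀ y ∈ Set.uIoc a b, 0 ≤ |φg y| - |φf y| := by
      intro y hy
      rw [uIoc_of_le hab.le] at hy
      rw [heqf y hy, heqg y hy]
      have := hbound y (le_of_lt (lt_of_le_of_lt ha hy.1))
      linarith
    have hpos : 0 < ∫ y in a..b, (|φg y| - |φf y|) := by
      rw [intervalIntegral.integral_pos_iff_support_of_nonneg_ae'
        (ae_restrict_of_forall_mem measurableSet_uIoc hψnonneg) hψint]
      refine ⟨hab, ?_⟩
      by_contra hz
      push_neg at hz
      have hz0 : volume (Function.support (fun y => |φg y| - |φf y|) ∩ Ioc a b) = 0 :=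
        le_antisymm (le_of_not_gt (by simpa using hz)) zero_le
      have hsub : Ioc a b ⊆
          (Function.support (fun y => |φg y| - |φf y|) ∩ Ioc a b) ∪
            {x : ℝ | 0 ≤ x ∧ |deriv f x| = |deriv g x|} := by
        intro y hy
        by_cases hmem : y ∈ Function.support (fun y => |φg y| - |φf y|)
        · exact Or.inl ⟨hmem, hy⟩
        · right
          simp only [Function.mem_support, not_not] at hmem
          have : |φg y| = |φf y| := by linarith [sub_eq_zero.mp hmem]
          refine ⟨le_of_lt (lt_of_le_of_lt ha hy.1), ?_⟩
          rw [← heqf y hy, ← heqg y hy, this]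
      have : volume (Ioc a b) = 0 := by
        refine le_antisymm ?_ zero_le
        calc volume (Ioc a b) ≤ _ := measure_mono hsub
        _ ≤ volume (Function.support (fun y => |φg y| - |φf y|) ∩ Ioc a b)
              + volume {x : ℝ | 0 ≤ x ∧ |deriv f x| = |deriv g x|} := measure_union_le _ _
        _ = 0 := by rw [hz0, hnull, add_zero]
      simp [Real.volume_Ioc] at this
      linarith
    have := intervalIntegral.integral_sub hintg' hintf'
    rw [this] at hpos
    linarith
  have habs : |∫ y in a..b, φf y| ≤ ∫ y in a..b, |φf y| :=
    intervalIntegral.abs_integral_le_integral_abs hab.le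
  have hgabs : ∫ y in a..b, |φg y| = ∫ y in a..b, φg y := by
    apply intervalIntegral.integral_congr_ae
    refine Eventually.of_forall (fun y hy => ?_)
    rw [uIoc_of_le hab.le] at hy
    rw [heqg y hy]
    exact abs_of_nonneg (hgmono y (le_of_lt (lt_of_le_of_lt ha hy.1)))
  calc |f b - f a| = |∫ y in a..b, φf y| := by rw [hFf]
    _ ≤ ∫ y in a..b, |φf y| := habs
    _ < ∫ y in a..b, |φg y| := hstrict
    _ = g b - g a := by rw [hgabs, hFg]


/-- under the stability hypotheses, every trajectory of
`g(x(t+1)) = f(x(t))` converges: `V(x(t)) = |f(x t) − g(x t)| → 0` and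
`x(t) → x*` with `f x* = g x*`. -/
theorem stmt_3 (f g : ℝ → ℝ)
    (hf : ContDiffOn ℝ 1 f (Set.Ici (0:ℝ))) (hg : ContDiffOn ℝ 1 g (Set.Ici (0:ℝ)))
    (hfpos : ∀ x ≥ (0:ℝ), 0 ≤ f x) (hgpos : ∀ x ≥ (0:ℝ), 0 ≤ g x)
    (hbound : ∀ x ≥ (0:ℝ), |deriv f x| ≤ |deriv g x|)
    (hnull : volume {x : ℝ | 0 ≤ x ∧ |deriv f x| = |deriv g x|} = 0)
    (hgmono : ∀ x ≥ (0:ℝ), 0 ≤ deriv g x)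
    (hlim : ∃ L : ℝ, L < 0 ∧ Tendsto (fun x => f x - g x) atTop (𝓝 L))
    (x : ℕ → ℝ) (hxpos : ∀ t, 0 ≤ x t)
    (htraj : ∀ t, g (x (t + 1)) = f (x t)) :
    Tendsto (fun t => |f (x t) - g (x t)|) atTop (𝓝 0) ∧
      ∃ xstar : ℝ, f xstar = g xstar ∧ Tendsto x atTop (𝓝 xstar) := by
  classical
  obtain ⟨L, hL, hLtends⟩ := hlim
  -- key lemmas
  have key : ∀ a b : ℝ, 0 ≤ a → a < b → |f b - f a| < g b - g a :=
    fun a b ha hab => key_strict f g hf hg hbound hnull hgmono ha hab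
  have gmono : ∀ a b : ℝ, 0 ≤ a → a ≤ b → g a ≤ g b := by
    intro a b ha hab
    rcases eq_or_lt_of_le hab with rfl | h
    · exact le_refl _
    · have := key a b ha h
      have := abs_nonneg (f b - f a)
      linarith
  have key_le : ∀ a b : ℝ, 0 ≤ a → 0 ≤ b → |f b - f a| ≤ |g b - g a| := by
    intro a b ha hb
    rcases lt_trichotomy a b with h | rfl | h
    · exact le_trans (key a b ha h).le (le_abs_self _)
    · simp
    · rw [abs_sub_comm (f b) (f a), abs_sub_comm (g b) (g a)]
      exact le_trans (key b a hb h).le (le_abs_self _)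
  -- continuity helper
  have hcont_seq : ∀ (F : ℝ → ℝ), ContinuousOn F (Ici (0:ℝ)) →
      ∀ (u : ℕ → ℝ) (p : ℝ), 0 ≤ p → (∀ n, 0 ≤ u n) → Tendsto u atTop (𝓝 p) →
      Tendsto (fun n => F (u n)) atTop (𝓝 (F p)) := by
    intro F hF u p hp hu hconv
    exact (hF p hp).tendsto.comp
      (tendsto_nhdsWithin_iff.mpr ⟨hconv, Eventually.of_forall hu⟩)
  -- M : beyond M, f - g ≤ L/2 < 0
  obtain ⟨M₀, hM₀⟩ : ∃ M₀ : ℝ, ∀ z ≥ M₀, f z - g z < L / 2 := by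
    have := hLtends.eventually_lt_const (show L < L/2 by linarith)
    exact eventually_atTop.mp this
  set M : ℝ := max M₀ 0 with hMdef
  have hM0 : (0:ℝ) ≤ M := le_max_right _ _
  have hM : ∀ z, M ≤ z → f z - g z < L / 2 := fun z hz =>
    hM₀ z (le_trans (le_max_left _ _) hz)
  -- F bound on [0, M]
  obtain ⟨C, hC⟩ : ∃ C : ℝ, ∀ z ∈ Icc (0:ℝ) M, f z ≤ C := by
    obtain ⟨C, hC⟩ := (isCompact_Icc (a := (0:ℝ)) (b := M)).exists_bound_of_continuousOn
      (hf.continuousOn.mono (fun y hy => hy.1))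
    exact ⟨C, fun z hz => le_trans (le_abs_self _) (hC z hz)⟩
  -- Lyapunov sequence
  set d : ℕ → ℝ := fun t => |f (x t) - g (x t)| with hd
  have hdstep : ∀ t, d (t + 1) ≤ d t := by
    intro t
    calc d (t + 1) = |f (x (t+1)) - f (x t)| := by rw [hd]; simp only; rw [htraj t]
      _ ≤ |g (x (t+1)) - g (x t)| := key_le _ _ (hxpos t) (hxpos (t+1))
      _ = |f (x t) - g (x t)| := by rw [htraj t, abs_sub_comm]
      _ = d t := rfl
  have hdant : Antitone d := antitone_nat_of_succ_le hdstep
  have hdbdd : BddBelow (Set.range d) := ⟨0, fun y ⟨t, ht⟩ => ht ▸ abs_nonneg _⟩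
  set c : ℝ := ⨅ t, d t with hcdef
  have htendc : Tendsto d atTop (𝓝 c) := tendsto_atTop_ciInf hdant hdbdd
  have hc0 : 0 ≤ c := le_ciInf (fun t => abs_nonneg _)
  -- boundedness of the trajectory
  have hbddx : BddAbove (Set.range x) := by
    by_contra hbdd
    rw [not_bddAbove_iff] at hbdd
    have hnb : ∀ R : ℝ, ∃ t, R < x t := by
      intro R
      obtain ⟨y, ⟨t, rfl⟩, hy⟩ := hbdd R
      exact ⟨t, hy⟩
    -- crossing construction
    have hcross : ∀ R : ℝ, ∃ s : ℕ, x s < M ∧ R < x (s + 1) := by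
      intro R
      set R' : ℝ := max R (max M (x 0)) with hR'
      have hex : ∃ t, R' < x t := hnb R'
      have ht := Nat.find_spec hex
      have ht0 : Nat.find hex ≠ 0 := by
        intro h
        rw [h] at ht
        have : x 0 ≤ R' := le_trans (le_max_right M (x 0)) (le_max_right R _)
        linarith
      obtain ⟨s, hseq⟩ := Nat.exists_eq_succ_of_ne_zero ht0
      have hxs : ¬ R' < x s := Nat.find_min hex (by omega)
      push_neg at hxs
      have hxs1 : R' < x (s + 1) := by rw [hseq] at ht; exact ht
      refine ⟨s, ?_, lt_of_le_of_lt (le_max_left R _) hxs1⟩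
      by_contra hMs
      push_neg at hMs
      have h1 : f (x s) - g (x s) < L / 2 := hM (x s) hMs
      have h3 : g (x s) ≤ g (x (s + 1)) :=
        gmono _ _ (hxpos s) (le_of_lt (lt_of_le_of_lt hxs hxs1))
      have h2 := htraj s
      linarith
    -- g is bounded above on [0,∞)
    have hgbdd : ∀ z : ℝ, 0 ≤ z → g z ≤ C := by
      intro z hz
      obtain ⟨s, hs1, hs2⟩ := hcross z
      calc g z ≤ g (x (s+1)) := gmono _ _ hz hs2.le
        _ = f (x s) := htraj s
        _ ≤ C := hC _ ⟨hxpos s, hs1.le⟩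
    set S : ℝ := sSup (g '' Ici (0:ℝ)) with hSdef
    have hSne : (g '' Ici (0:ℝ)).Nonempty := ⟨g 0, 0, Set.self_mem_Ici, rfl⟩
    have hSbdd : BddAbove (g '' Ici (0:ℝ)) :=
      ⟨C, fun y ⟨z, hz, hzy⟩ => hzy ▸ hgbdd z hz⟩
    have hSub : ∀ z : ℝ, 0 ≤ z → g z ≤ S := fun z hz => le_csSup hSbdd ⟨z, hz, rfl⟩
    have hgtendsS : Tendsto g atTop (𝓝 S) := by
      rw [Metric.tendsto_atTop]
      intro ε hε
      obtain ⟨y, ⟨z₀, hz₀, rfl⟩, hy2⟩ := exists_lt_of_lt_csSup hSne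
        (show S - ε < S by linarith)
      refine ⟨max z₀ 1, fun n hn => ?_⟩
      have hz0n : z₀ ≤ n := le_trans (le_max_left _ _) hn
      have hn0 : (0:ℝ) ≤ n := le_trans (by positivity) (le_trans (le_max_right z₀ 1) hn)
      have h1 : g z₀ ≤ g n := gmono _ _ hz₀ hz0n
      have h2 : g n ≤ S := hSub n hn0
      rw [Real.dist_eq, abs_lt]
      constructor <;> linarith
    have hftendsS : Tendsto f atTop (𝓝 (S + L)) := by
      have := hgtendsS.add hLtends
      simpa using this
    have hVtends : Tendsto (fun z => |f z - g z|) atTop (𝓝 (-L)) := by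
      have := hLtends.abs
      rwa [abs_of_neg hL] at this
    -- choose crossing times going to infinity
    have hRk : ∀ k : ℕ, ∃ s : ℕ, x s < M ∧
        max (k:ℝ) ((Finset.range (k+1)).sup' (by simp) x) < x (s + 1) :=
      fun k => hcross _
    choose sfun hs1 hs2 using hRk
    have hs3 : ∀ k, k ≤ sfun k := by
      intro k
      by_contra h
      push_neg at h
      have hmem : sfun k + 1 ∈ Finset.range (k+1) := by
        simp only [Finset.mem_range]; omega
      have : x (sfun k + 1) ≤ (Finset.range (k+1)).sup' (by simp) x :=
        Finset.le_sup' x hmem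
      have := hs2 k
      have h2 : ((Finset.range (k+1)).sup' (by simp) x : ℝ) ≤
          max (k:ℝ) ((Finset.range (k+1)).sup' (by simp) x) := le_max_right _ _
      linarith
    have htends_s1 : Tendsto (fun k => sfun k + 1) atTop atTop :=
      tendsto_atTop_mono (fun k => le_trans (hs3 k) (Nat.le_succ _)) tendsto_id
    have htends_s0 : Tendsto sfun atTop atTop :=
      tendsto_atTop_mono hs3 tendsto_id
    have hxs1_top : Tendsto (fun k => x (sfun k + 1)) atTop atTop := by
      apply tendsto_atTop_mono (fun k => (le_trans (le_max_left _ _) (hs2 k).le))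
      exact tendsto_natCast_atTop_atTop
    have hcL : c = -L := by
      refine tendsto_nhds_unique (htendc.comp htends_s1) ?_
      exact hVtends.comp hxs1_top
    -- Bolzano-Weierstrass on the pre-crossing points
    obtain ⟨p, hpmem, φ, hφmono, hφconv⟩ :=
      tendsto_subseq_of_bounded (Metric.isBounded_Icc (0:ℝ) M)
        (x := fun k => x (sfun k)) (fun k => ⟨hxpos _, (hs1 k).le⟩)
    rw [IsClosed.closure_eq isClosed_Icc] at hpmem
    have hp0 : (0:ℝ) ≤ p := hpmem.1
    have hφtends : Tendsto (fun j => x (sfun (φ j))) atTop (𝓝 p) := hφconv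
    -- V p = c = -L
    have hVp : |f p - g p| = c := by
      refine tendsto_nhds_unique ?_ (htendc.comp (htends_s0.comp hφmono.tendsto_atTop))
      have h1 := hcont_seq f hf.continuousOn _ p hp0 (fun j => hxpos _) hφtends
      have h2 := hcont_seq g hg.continuousOn _ p hp0 (fun j => hxpos _) hφtends
      exact (h1.sub h2).abs
    -- f p = S
    have hfpS : f p = S := by
      have hleft : Tendsto (fun j => g (x (sfun (φ j) + 1))) atTop (𝓝 S) :=
        hgtendsS.comp (hxs1_top.comp hφmono.tendsto_atTop)
      have hright : Tendsto (fun j => g (x (sfun (φ j) + 1))) atTop (𝓝 (f p)) := by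
        have h1 := hcont_seq f hf.continuousOn _ p hp0 (fun j => hxpos _) hφtends
        refine h1.congr (fun j => ?_)
        exact (htraj (sfun (φ j))).symm
      exact tendsto_nhds_unique hright hleft
    -- g p = S + L
    have hgpSL : g p = S + L := by
      rw [hfpS, hcL] at hVp
      have hgle : g p ≤ S := hSub p hp0
      rcases abs_eq (show (0:ℝ) ≤ -L by linarith) |>.mp hVp with h | h
      · linarith
      · linarith
    -- final contradiction via key at infinity
    set m : ℝ := p + 1 with hm
    have hm0 : (0:ℝ) ≤ m := by linarith
    have hkey1 : |f m - f p| < g m - g p := key p m hp0 (by linarith)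
    have hlimle : |S + L - f m| ≤ S - g m := by
      have hev : ∀ᶠ b in atTop, |f b - f m| ≤ g b - g m :=
        (eventually_gt_atTop m).mono (fun b hb => (key m b hm0 hb).le)
      have h1 : Tendsto (fun b => |f b - f m|) atTop (𝓝 |S + L - f m|) :=
        ((hftendsS.sub_const (f m))).abs
      have h2 : Tendsto (fun b => g b - g m) atTop (𝓝 (S - g m)) :=
        hgtendsS.sub_const (g m)
      exact le_of_tendsto_of_tendsto h1 h2 hev
    have htri : |S + L - f p| ≤ |S + L - f m| + |f m - f p| := abs_sub_le _ _ _
    rw [hfpS] at htri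
    have habsL : |S + L - S| = -L := by
      rw [show S + L - S = L by ring, abs_of_neg hL]
    rw [habsL] at htri
    rw [hfpS, hgpSL] at hkey1
    linarith
  -- now the trajectory is bounded
  obtain ⟨X, hX⟩ := hbddx
  have hXmem : ∀ t, x t ∈ Icc (0:ℝ) X := fun t => ⟨hxpos t, hX ⟨t, rfl⟩⟩
  obtain ⟨p, hpmem, φ, hφmono, hφconv⟩ :=
    tendsto_subseq_of_bounded (Metric.isBounded_Icc (0:ℝ) X) hXmem
  rw [IsClosed.closure_eq isClosed_Icc] at hpmem
  have hp0 : (0:ℝ) ≤ p := hpmem.1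
  obtain ⟨q, hqmem, φ₂, hφ₂mono, hφ₂conv⟩ :=
    tendsto_subseq_of_bounded (Metric.isBounded_Icc (0:ℝ) X)
      (x := fun k => x (φ k + 1)) (fun k => hXmem _)
  rw [IsClosed.closure_eq isClosed_Icc] at hqmem
  have hq0 : (0:ℝ) ≤ q := hqmem.1
  set ψ : ℕ → ℕ := φ ∘ φ₂ with hψ
  have hψmono : StrictMono ψ := hφmono.comp hφ₂mono
  have hψconv : Tendsto (fun j => x (ψ j)) atTop (𝓝 p) :=
    hφconv.comp hφ₂mono.tendsto_atTop
  have hψ1conv : Tendsto (fun j => x (ψ j + 1)) atTop (𝓝 q) := hφ₂conv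
  have hgq : g q = f p := by
    have hleft : Tendsto (fun j => g (x (ψ j + 1))) atTop (𝓝 (g q)) :=
      hcont_seq g hg.continuousOn _ q hq0 (fun j => hxpos _) hψ1conv
    have hright : Tendsto (fun j => g (x (ψ j + 1))) atTop (𝓝 (f p)) :=
      (hcont_seq f hf.continuousOn _ p hp0 (fun j => hxpos _) hψconv).congr
        fun j => (htraj (ψ j)).symm
    exact tendsto_nhds_unique hleft hright
  have hVp : |f p - g p| = c := by
    refine tendsto_nhds_unique ?_ (htendc.comp hψmono.tendsto_atTop)
    exact ((hcont_seq f hf.continuousOn _ p hp0 (fun j => hxpos _) hψconv).sub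
      (hcont_seq g hg.continuousOn _ p hp0 (fun j => hxpos _) hψconv)).abs
  have hVq : |f q - g q| = c := by
    refine tendsto_nhds_unique ?_ (htendc.comp
      (tendsto_atTop_mono (fun j => Nat.le_succ (ψ j)) hψmono.tendsto_atTop))
    exact ((hcont_seq f hf.continuousOn _ q hq0 (fun j => hxpos _) hψ1conv).sub
      (hcont_seq g hg.continuousOn _ q hq0 (fun j => hxpos _) hψ1conv)).abs
  have hc00 : c = 0 := by
    by_contra hcne
    have hcpos : 0 < c := lt_of_le_of_ne hc0 (Ne.symm hcne)
    have hpq : p ≠ q := by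
      intro h
      rw [← h] at hgq
      rw [hgq] at hVp
      simp at hVp
      linarith
    have hstrict : |f q - f p| < |g q - g p| := by
      rcases lt_or_gt_of_ne hpq with h | h
      · exact lt_of_lt_of_le (key p q hp0 h) (le_abs_self _)
      · rw [abs_sub_comm (f q), abs_sub_comm (g q)]
        exact lt_of_lt_of_le (key q p hq0 h) (le_abs_self _)
    have h1 : |f q - f p| = c := by rw [← hgq]; exact hVq
    have h2 : |g q - g p| = c := by rw [hgq]; exact hVp
    rw [h1, h2] at hstrict
    exact lt_irrefl _ hstrict
  have hfp : f p = g p := by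
    rw [hc00] at hVp
    have := abs_eq_zero.mp hVp
    linarith
  refine ⟨hc00 ▸ htendc, p, hfp, ?_⟩
  apply tendsto_of_subseq_tendsto
  intro ns hns
  obtain ⟨q', hq'mem, ms, hmsmono, hmsconv⟩ :=
    tendsto_subseq_of_bounded (Metric.isBounded_Icc (0:ℝ) X)
      (x := fun n => x (ns n)) (fun n => hXmem _)
  rw [IsClosed.closure_eq isClosed_Icc] at hq'mem
  have hq'0 : (0:ℝ) ≤ q' := hq'mem.1
  refine ⟨ms, ?_⟩
  have hVq' : |f q' - g q'| = c := by
    refine tendsto_nhds_unique ?_ (htendc.comp (hns.comp hmsmono.tendsto_atTop))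
    exact ((hcont_seq f hf.continuousOn _ q' hq'0 (fun j => hxpos _) hmsconv).sub
      (hcont_seq g hg.continuousOn _ q' hq'0 (fun j => hxpos _) hmsconv)).abs
  have hfq' : f q' = g q' := by
    rw [hc00] at hVq'
    have := abs_eq_zero.mp hVq'
    linarith
  have hqp : q' = p := by
    by_contra hne
    rcases lt_or_gt_of_ne hne with h | h
    · have hk := key q' p hq'0 h
      rw [hfq', hfp] at hk
      have h2 := le_abs_self (g p - g q')
      linarith
    · have hk := key p q' hp0 h
      rw [hfq', hfp] at hk
      have h2 := le_abs_self (g q' - g p)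
      linarith
  rw [← hqp]
  exact hmsconv
end

section
/- If f and g satisfy g(x(t+1)) = f(x(t)) and ρ : ℝ₊ → ℝ is strictly monotone and continuously differentiable with |ρ'(f(x)) f'(x)| ≤ θ |ρ'(g(x)) g'(x)| for all x > 0 and some θ ≤ 1 (plus measure-zero equality set and boundary conditions for ρ∘f, ρ∘g), then the system g(x(t+1)) = f(x(t)) is stable, since ρ∘f and ρ∘g also satisfy the implicit recursion (ρ∘g)(x(t+1)) = (ρ∘f)(x(t)). -/
open Set MeasureTheory Filter Topology

set_option maxHeartbeats 1000000

/-- scaled stability criterion: if a strictly monotone `C¹` scaling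
`ρ` makes the derivative bound `|ρ'(f x) f'(x)| ≤ θ |ρ'(g x) g'(x)|` (θ ≤ 1) hold,
together with the measure-zero equality set and boundary conditions for
`ρ∘f`, `ρ∘g`, then the system `g(x(t+1)) = f(x(t))` is stable: every trajectory
converges. -/
theorem stmt_4 (f g : ℝ → ℝ) (ρ : ℝ → ℝ) (θ : ℝ)
    (hf : ContDiffOn ℝ 1 f (Set.Ici (0:ℝ))) (hg : ContDiffOn ℝ 1 g (Set.Ici (0:ℝ)))
    (hfpos : ∀ x ≥ (0:ℝ), 0 ≤ f x) (hgpos : ∀ x ≥ (0:ℝ), 0 ≤ g x)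
    (hρ : ContDiff ℝ 1 ρ) (hρmono : StrictMono ρ ∨ StrictAnti ρ)
    (hθ : θ ≤ 1)
    (hbound : ∀ x > (0:ℝ), |deriv ρ (f x) * deriv f x| ≤ θ * |deriv ρ (g x) * deriv g x|)
    (hnull : volume {x : ℝ | 0 ≤ x ∧ |deriv (ρ ∘ f) x| = |deriv (ρ ∘ g) x|} = 0)
    (hgmono : ∀ x ≥ (0:ℝ), 0 ≤ deriv (ρ ∘ g) x)
    (hlim : ∃ L : ℝ, L < 0 ∧ Tendsto (fun x => ρ (f x) - ρ (g x)) atTop (𝓝 L))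
    (x : ℕ → ℝ) (hxpos : ∀ t, 0 ≤ x t)
    (htraj : ∀ t, g (x (t + 1)) = f (x t)) :
    (∀ t, ρ (g (x (t + 1))) = ρ (f (x t))) ∧
      ∃ xstar : ℝ, Tendsto x atTop (𝓝 xstar) := by
  obtain ⟨L, hL, hLt⟩ := hlim
  set ψ := ρ ∘ f with hψdef
  set φ := ρ ∘ g with hφdef
  have hψC : ContDiffOn ℝ 1 ψ (Set.Ici 0) := hρ.comp_contDiffOn hf
  have hφC : ContDiffOn ℝ 1 φ (Set.Ici 0) := hρ.comp_contDiffOn hg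
  set Dψ := derivWithin ψ (Set.Ici 0) with hDψdef
  set Dφ := derivWithin φ (Set.Ici 0) with hDφdef
  have hDψcont : ContinuousOn Dψ (Set.Ici 0) :=
    hψC.continuousOn_derivWithin (uniqueDiffOn_Ici 0) le_rfl
  have hDφcont : ContinuousOn Dφ (Set.Ici 0) :=
    hφC.continuousOn_derivWithin (uniqueDiffOn_Ici 0) le_rfl
  -- identification with deriv on Ioi 0
  have hDW : ∀ (F : ℝ → ℝ), ∀ x > (0:ℝ), derivWithin F (Set.Ici 0) x = deriv F x := by
    intro F x hx
    exact derivWithin_of_mem_nhds (Ici_mem_nhds hx)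
  have hψdiff : ∀ x > (0:ℝ), DifferentiableAt ℝ ψ x := by
    intro x hx
    exact ((hψC.differentiableOn one_ne_zero) x (le_of_lt hx)).differentiableAt (Ici_mem_nhds hx)
  have hφdiff : ∀ x > (0:ℝ), DifferentiableAt ℝ φ x := by
    intro x hx
    exact ((hφC.differentiableOn one_ne_zero) x (le_of_lt hx)).differentiableAt (Ici_mem_nhds hx)
  have hDψ_eq : ∀ x > (0:ℝ), Dψ x = deriv ρ (f x) * deriv f x := by
    intro x hx
    have hfd : DifferentiableAt ℝ f x :=
      ((hf.differentiableOn one_ne_zero) x (le_of_lt hx)).differentiableAt (Ici_mem_nhds hx)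
    rw [hDψdef, hDW ψ x hx, hψdef,
      deriv_comp x ((hρ.differentiable one_ne_zero) (f x)) hfd]
  have hDφ_eq : ∀ x > (0:ℝ), Dφ x = deriv ρ (g x) * deriv g x := by
    intro x hx
    have hgd : DifferentiableAt ℝ g x :=
      ((hg.differentiableOn one_ne_zero) x (le_of_lt hx)).differentiableAt (Ici_mem_nhds hx)
    rw [hDφdef, hDW φ x hx, hφdef,
      deriv_comp x ((hρ.differentiable one_ne_zero) (g x)) hgd]
  have hDφpos' : ∀ x > (0:ℝ), 0 ≤ Dφ x := by
    intro x hx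
    rw [hDφdef, hDW φ x hx]
    exact hgmono x (le_of_lt hx)
  have hDle' : ∀ x > (0:ℝ), |Dψ x| ≤ Dφ x := by
    intro x hx
    rw [hDψ_eq x hx]
    calc |deriv ρ (f x) * deriv f x| ≤ θ * |deriv ρ (g x) * deriv g x| := hbound x hx
    _ ≤ 1 * |deriv ρ (g x) * deriv g x| := by
        apply mul_le_mul_of_nonneg_right hθ (abs_nonneg _)
    _ = |Dφ x| := by rw [one_mul, hDφ_eq x hx]
    _ = Dφ x := abs_of_nonneg (hDφpos' x hx)
  -- extend to 0 by continuity
  have hDle : ∀ x ≥ (0:ℝ), |Dψ x| ≤ Dφ x := by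
    intro x hx
    rcases eq_or_lt_of_le hx with h0 | h0
    · -- x = 0 : continuity argument
      subst h0
      have hc : ContinuousWithinAt (fun y => Dφ y - |Dψ y|) (Set.Ici 0) 0 := by
        exact ((hDφcont 0 Set.self_mem_Ici).sub (hDψcont 0 Set.self_mem_Ici).abs)
      have hu : Tendsto (fun n : ℕ => (1:ℝ) / (n + 1)) atTop (𝓝[Set.Ici (0:ℝ)] 0) := by
        rw [tendsto_nhdsWithin_iff]
        refine ⟨tendsto_one_div_add_atTop_nhds_zero_nat, Eventually.of_forall fun n => ?_⟩
        have : (0:ℝ) < 1/(n+1) := by positivity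
        exact le_of_lt this
      have hlim : Tendsto (fun n : ℕ => Dφ ((1:ℝ)/(n+1)) - |Dψ ((1:ℝ)/(n+1))|) atTop
          (𝓝 (Dφ 0 - |Dψ 0|)) := hc.tendsto.comp hu
      have : 0 ≤ Dφ 0 - |Dψ 0| := by
        refine ge_of_tendsto hlim (Eventually.of_forall fun n => ?_)
        have : (0:ℝ) < 1 / (n + 1) := by positivity
        linarith [hDle' _ this]
      linarith
    · exact hDle' x h0
  -- FTC
  have hFTC : ∀ (F : ℝ → ℝ), ContDiffOn ℝ 1 F (Set.Ici 0) → ∀ a b : ℝ, 0 ≤ a → a ≤ b →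
      ∫ y in a..b, derivWithin F (Set.Ici 0) y = F b - F a := by
    intro F hF a b ha hab
    have hsub : Set.Icc a b ⊆ Set.Ici (0:ℝ) := fun y hy => le_trans ha hy.1
    have hDcont : ContinuousOn (derivWithin F (Set.Ici 0)) (Set.Icc a b) :=
      (hF.continuousOn_derivWithin (uniqueDiffOn_Ici 0) le_rfl).mono hsub
    refine intervalIntegral.integral_eq_sub_of_hasDeriv_right_of_le hab
      (hF.continuousOn.mono hsub) (fun y hy => ?_) ?_
    · have hy0 : (0:ℝ) < y := lt_of_le_of_lt ha hy.1
      have hd : DifferentiableAt ℝ F y :=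
        ((hF.differentiableOn one_ne_zero) y (le_of_lt hy0)).differentiableAt (Ici_mem_nhds hy0)
      rw [derivWithin_of_mem_nhds (Ici_mem_nhds hy0)]
      exact hd.hasDerivAt.hasDerivWithinAt
    · have : ContinuousOn (derivWithin F (Set.Ici 0)) (Set.uIcc a b) := by
        rw [Set.uIcc_of_le hab]; exact hDcont
      exact this.intervalIntegrable
  -- continuity of the integrand pieces on Icc ⊆ Ici 0
  have hsub : ∀ u v : ℝ, 0 ≤ u → Set.Icc u v ⊆ Set.Ici (0:ℝ) := fun u v hu y hy => le_trans hu hy.1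
  have hIcont : ∀ u v : ℝ, 0 ≤ u → ContinuousOn (fun y => Dφ y - |Dψ y|) (Set.Icc u v) :=
    fun u v hu => ((hDφcont.mono (hsub u v hu)).sub (hDψcont.mono (hsub u v hu)).abs)
  have hInt : ∀ u v : ℝ, 0 ≤ u → u ≤ v →
      IntervalIntegrable (fun y => Dφ y - |Dψ y|) volume u v := by
    intro u v hu huv
    have : ContinuousOn (fun y => Dφ y - |Dψ y|) (Set.uIcc u v) := by
      rw [Set.uIcc_of_le huv]; exact hIcont u v hu
    exact this.intervalIntegrable
  have hIntφ : ∀ u v : ℝ, 0 ≤ u → u ≤ v → IntervalIntegrable Dφ volume u v := by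
    intro u v hu huv
    have : ContinuousOn Dφ (Set.uIcc u v) := by
      rw [Set.uIcc_of_le huv]; exact hDφcont.mono (hsub u v hu)
    exact this.intervalIntegrable
  have hIntψ : ∀ u v : ℝ, 0 ≤ u → u ≤ v → IntervalIntegrable (fun y => |Dψ y|) volume u v := by
    intro u v hu huv
    have : ContinuousOn (fun y => |Dψ y|) (Set.uIcc u v) := by
      rw [Set.uIcc_of_le huv]; exact (hDψcont.mono (hsub u v hu)).abs
    exact this.intervalIntegrable
  set E : ℝ → ℝ → ℝ := fun u v => ∫ y in u..v, (Dφ y - |Dψ y|) with hEdef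
  have hEnn : ∀ u v : ℝ, 0 ≤ u → u ≤ v → 0 ≤ E u v := by
    intro u v hu huv
    exact intervalIntegral.integral_nonneg huv fun y hy => sub_nonneg.2 (hDle y (le_trans hu hy.1))
  have hEmono : ∀ a u v b : ℝ, 0 ≤ a → a ≤ u → u ≤ v → v ≤ b → E u v ≤ E a b := by
    intro a u v b ha hau huv hvb
    have h1 : E a v = E a u + E u v :=
      (intervalIntegral.integral_add_adjacent_intervals (hInt a u ha hau)
        (hInt u v (le_trans ha hau) huv)).symm
    have h2 : E a b = E a v + E v b :=
      (intervalIntegral.integral_add_adjacent_intervals (hInt a v ha (le_trans hau huv))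
        (hInt v b (le_trans ha (le_trans hau huv)) hvb)).symm
    have n1 : 0 ≤ E a u := hEnn a u ha hau
    have n2 : 0 ≤ E v b := hEnn v b (le_trans ha (le_trans hau huv)) hvb
    linarith
  have hEpos : ∀ u v : ℝ, 0 ≤ u → u < v → 0 < E u v := by
    intro u v hu huv
    rcases lt_or_ge 0 (E u v) with h | h
    · exact h
    have hE0 : E u v = 0 := le_antisymm h (hEnn u v hu (le_of_lt huv))
    exfalso
    have hae0 : (fun y => Dφ y - |Dψ y|)
        =ᵐ[volume.restrict (Set.Ioc u v ∪ Set.Ioc v u)] 0 := by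
      refine (intervalIntegral.integral_eq_zero_iff_of_nonneg_ae ?_ (hInt u v hu (le_of_lt huv))).1 hE0
      refine ae_restrict_of_forall_mem (by measurability) ?_
      rintro y (hy | hy)
      · exact sub_nonneg.2 (hDle y (le_trans hu (le_of_lt hy.1)))
      · exact absurd (lt_trans hy.1 (lt_of_le_of_lt hy.2 huv)) (lt_irrefl _)
    have hUeq : Set.Ioc u v ∪ Set.Ioc v u = Set.Ioc u v := by
      rw [Set.Ioc_eq_empty (not_lt.2 (le_of_lt huv)), Set.union_empty]
    rw [hUeq] at hae0
    have hae : ∀ᵐ y ∂(volume : Measure ℝ), y ∈ Set.Ioc u v → Dφ y - |Dψ y| = 0 :=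
      (ae_restrict_iff' measurableSet_Ioc).1 hae0
    set bad := {y : ℝ | ¬ (y ∈ Set.Ioc u v → Dφ y - |Dψ y| = 0)} with hbaddef
    have hbadnull : volume bad = 0 := by
      have := hae
      rw [MeasureTheory.ae_iff] at this
      exact this
    have hcover : Set.Ioc u v ⊆
        {x : ℝ | 0 ≤ x ∧ |deriv ψ x| = |deriv φ x|} ∪ bad := by
      intro y hy
      by_cases hcase : y ∈ Set.Ioc u v → Dφ y - |Dψ y| = 0
      · left
        have hy0 : (0:ℝ) < y := lt_of_le_of_lt hu hy.1
        have heq : Dφ y = |Dψ y| := by linarith [hcase hy]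
        refine ⟨le_of_lt hy0, ?_⟩
        rw [← hDW ψ y hy0, ← hDW φ y hy0]
        rw [abs_of_nonneg (hDφpos' y hy0), ← heq]
      · right; exact hcase
    have hle : volume (Set.Ioc u v) ≤ 0 := by
      calc volume (Set.Ioc u v)
          ≤ volume ({x : ℝ | 0 ≤ x ∧ |deriv ψ x| = |deriv φ x|} ∪ bad) := measure_mono hcover
        _ ≤ volume {x : ℝ | 0 ≤ x ∧ |deriv ψ x| = |deriv φ x|} + volume bad := measure_union_le _ _
        _ = 0 := by rw [hnull, hbadnull, add_zero]
    have : volume (Set.Ioc u v) = ENNReal.ofReal (v - u) := Real.volume_Ioc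
    rw [this] at hle
    simp only [nonpos_iff_eq_zero, ENNReal.ofReal_eq_zero] at hle
    linarith
  -- core contraction estimate
  have hcore : ∀ a b : ℝ, 0 ≤ a → a ≤ b → |ψ b - ψ a| ≤ (φ b - φ a) - E a b := by
    intro a b ha hab
    have hψint : ψ b - ψ a = ∫ y in a..b, Dψ y := (hFTC ψ hψC a b ha hab).symm
    have hφint : φ b - φ a = ∫ y in a..b, Dφ y := (hFTC φ hφC a b ha hab).symm
    have hIntψ' : IntervalIntegrable Dψ volume a b := by
      have : ContinuousOn Dψ (Set.uIcc a b) := by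
        rw [Set.uIcc_of_le hab]; exact hDψcont.mono (hsub a b ha)
      exact this.intervalIntegrable
    have h1 : |ψ b - ψ a| ≤ ∫ y in a..b, |Dψ y| := by
      rw [hψint]
      exact intervalIntegral.abs_integral_le_integral_abs hab
    have h2 : E a b = (φ b - φ a) - ∫ y in a..b, |Dψ y| := by
      rw [hEdef, hφint]
      exact intervalIntegral.integral_sub (hIntφ a b ha hab) (hIntψ a b ha hab)
    linarith
  have hφsm : StrictMonoOn φ (Set.Ici 0) := by
    intro a ha b hb hab
    have h1 := hcore a b ha (le_of_lt hab)
    have h2 := hEpos a b ha hab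
    have h3 := abs_nonneg (ψ b - ψ a)
    linarith
  have hweak : ∀ a b : ℝ, 0 ≤ a → 0 ≤ b → |ψ b - ψ a| ≤ |φ b - φ a| := by
    have key : ∀ a b : ℝ, 0 ≤ a → a ≤ b → |ψ b - ψ a| ≤ |φ b - φ a| := by
      intro a b ha hab
      have h1 := hcore a b ha hab
      have h2 := hEnn a b ha hab
      have h3 := le_abs_self (φ b - φ a)
      linarith
    intro a b ha hb
    rcases le_total a b with hab | hab
    · exact key a b ha hab
    · rw [abs_sub_comm (ψ b), abs_sub_comm (φ b)]
      exact key b a hb hab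
  have hφmono : MonotoneOn φ (Set.Ici 0) := hφsm.monotoneOn
  -- trajectory facts
  have htraj' : ∀ t, φ (x (t+1)) = ψ (x t) := fun t => congrArg ρ (htraj t)
  set d : ℕ → ℝ := fun t => |φ (x (t+1)) - φ (x t)| with hddef
  have hdsucc : ∀ t, d (t+1) = |ψ (x (t+1)) - ψ (x t)| := by
    intro t
    show |φ (x (t+1+1)) - φ (x (t+1))| = _
    rw [htraj' (t+1), htraj' t]
  have hd_anti : Antitone d := by
    apply antitone_nat_of_succ_le
    intro t
    rw [hdsucc t]
    exact hweak (x t) (x (t+1)) (hxpos t) (hxpos (t+1))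
  have hφ0le : ∀ t, φ 0 ≤ φ (x t) :=
    fun t => hφmono Set.self_mem_Ici (hxpos t) (hxpos t)
  have hh : Tendsto (fun y => ψ y - φ y) atTop (𝓝 L) := hLt
  -- the trajectory does not diverge to infinity
  have hnotinf : ¬ Tendsto x atTop atTop := by
    intro hdiv
    obtain ⟨M, hM⟩ : ∃ M, ∀ y ≥ M, ψ y - φ y < L/2 := by
      have hev : ∀ᶠ y in atTop, ψ y - φ y < L/2 :=
        hh.eventually_lt_const (by linarith)
      rw [eventually_atTop] at hev
      exact hev
    obtain ⟨T, hT⟩ : ∃ T, ∀ t ≥ T, M ≤ x t := by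
      rw [tendsto_atTop] at hdiv
      have := hdiv M
      rw [eventually_atTop] at this
      exact this
    have key : ∀ n : ℕ, φ (x (T+n)) ≤ φ (x T) + n * (L/2) := by
      intro n
      induction n with
      | zero => simp
      | succ n ih =>
        have h1 : φ (x (T+n+1)) = ψ (x (T+n)) := htraj' (T+n)
        have h2 : ψ (x (T+n)) - φ (x (T+n)) < L/2 := hM _ (hT (T+n) (Nat.le_add_right T n))
        have h3 : T + (n+1) = (T+n)+1 := by omega
        rw [h3, h1]
        push_cast
        linarith
    obtain ⟨n, hn⟩ := exists_nat_gt ((φ (x T) - φ 0) / (-(L/2)))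
    have hL2 : (0:ℝ) < -(L/2) := by linarith
    have h4 : φ (x T) - φ 0 < n * (-(L/2)) := by
      have := (div_lt_iff₀ hL2).1 hn
      linarith
    have h5 := key n
    have h6 := hφ0le (T+n)
    nlinarith
  -- extract a convergent subsequence
  obtain ⟨K, hK⟩ : ∃ K : ℝ, ∃ᶠ t in atTop, x t < K := by
    by_contra hcon
    push_neg at hcon
    apply hnotinf
    rw [tendsto_atTop]
    intro K
    have := hcon K
    filter_upwards [this] with t ht
    exact ht
  obtain ⟨σ0, hσ0mono, hσ0⟩ := Filter.extraction_of_frequently_atTop hK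
  have hmem : ∀ k, x (σ0 k) ∈ Set.Icc (0:ℝ) K := fun k => ⟨hxpos _, le_of_lt (hσ0 k)⟩
  obtain ⟨p, hpmem, σ1, hσ1mono, hσ1lim⟩ := (isCompact_Icc).tendsto_subseq hmem
  set σ : ℕ → ℕ := σ0 ∘ σ1 with hσdef
  have hσmono : StrictMono σ := hσ0mono.comp hσ1mono
  have hσlim : Tendsto (fun k => x (σ k)) atTop (𝓝 p) := hσ1lim
  have hp0 : (0:ℝ) ≤ p := hpmem.1
  -- limit of the antitone sequence d
  have hdnn : ∀ t, 0 ≤ d t := fun t => abs_nonneg _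
  have hbddd : BddBelow (Set.range d) := ⟨0, by rintro y ⟨t, rfl⟩; exact hdnn t⟩
  set δ := ⨅ t, d t with hδdef
  have hdlim : Tendsto d atTop (𝓝 δ) := tendsto_atTop_ciInf hd_anti hbddd
  have hδnn : 0 ≤ δ := le_ciInf hdnn
  have hδle : ∀ t, δ ≤ d t := fun t => ciInf_le hbddd t
  -- continuity helpers
  have hφct : ContinuousOn φ (Set.Ici 0) := hφC.continuousOn
  have hψct : ContinuousOn ψ (Set.Ici 0) := hψC.continuousOn
  have htendaux : ∀ (F : ℝ → ℝ), ContinuousOn F (Set.Ici 0) →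
      ∀ (y : ℕ → ℝ) (q : ℝ), 0 ≤ q → (∀ k, 0 ≤ y k) → Tendsto y atTop (𝓝 q) →
      Tendsto (fun k => F (y k)) atTop (𝓝 (F q)) := by
    intro F hF y q hq hy hlim'
    have hyw : Tendsto y atTop (𝓝[Set.Ici 0] q) := by
      rw [tendsto_nhdsWithin_iff]
      exact ⟨hlim', Eventually.of_forall hy⟩
    exact ((hF q hq).tendsto).comp hyw
  -- δ = 0
  have hδ0 : δ = 0 := by
    by_contra hδne
    have hδpos : 0 < δ := lt_of_le_of_ne hδnn (Ne.symm hδne)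
    set b : ℕ → ℝ := fun k => x (σ k + 1) with hbdef
    have hidx1 : Tendsto (fun k => σ k + 1) atTop atTop :=
      tendsto_atTop_mono (fun k => Nat.le_succ (σ k)) hσmono.tendsto_atTop
    have hdσ : Tendsto (fun k => d (σ k)) atTop (𝓝 δ) := hdlim.comp hσmono.tendsto_atTop
    by_cases hbinf : Tendsto b atTop atTop
    · -- the next iterates escape to infinity: uniform gap contradiction
      have hε0pos : 0 < E (p+1) (p+2) := hEpos (p+1) (p+2) (by linarith) (by linarith)
      have h1 : ∀ᶠ k in atTop, x (σ k) ≤ p + 1 := by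
        have := hσlim.eventually_lt_const (show p < p + 1 by linarith)
        filter_upwards [this] with k hk using le_of_lt hk
      have h2 : ∀ᶠ k in atTop, p + 2 ≤ b k := by
        rw [tendsto_atTop] at hbinf
        exact hbinf (p+2)
      have key : ∀ᶠ k in atTop, δ + E (p+1) (p+2) ≤ d (σ k) := by
        filter_upwards [h1, h2] with k hk1 hk2
        have ha0 : 0 ≤ x (σ k) := hxpos _
        have hab : x (σ k) ≤ b k := by linarith
        have hstep : |ψ (b k) - ψ (x (σ k))| ≤ (φ (b k) - φ (x (σ k))) - E (x (σ k)) (b k) :=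
          hcore _ _ ha0 hab
        have hgap : E (p+1) (p+2) ≤ E (x (σ k)) (b k) :=
          hEmono _ _ _ _ ha0 (by linarith) (by linarith) (by linarith)
        have hd1 : d (σ k) = |φ (b k) - φ (x (σ k))| := rfl
        have hd2 : d (σ k + 1) = |ψ (b k) - ψ (x (σ k))| := hdsucc (σ k)
        have hδd : δ ≤ d (σ k + 1) := hδle _
        have habs : φ (b k) - φ (x (σ k)) ≤ |φ (b k) - φ (x (σ k))| := le_abs_self _
        rw [hd1]
        rw [hd2] at hδd
        linarith
      have : δ + E (p+1) (p+2) ≤ δ := ge_of_tendsto hdσ key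
      linarith
    · -- the next iterates have a convergent subsequence
      obtain ⟨K2, hK2⟩ : ∃ K2 : ℝ, ∃ᶠ k in atTop, b k < K2 := by
        by_contra hcon
        push_neg at hcon
        apply hbinf
        rw [tendsto_atTop]
        intro K2
        have := hcon K2
        filter_upwards [this] with k hk
        exact hk
      obtain ⟨τ0, hτ0mono, hτ0⟩ := Filter.extraction_of_frequently_atTop hK2
      have hmem2 : ∀ k, b (τ0 k) ∈ Set.Icc (0:ℝ) K2 := fun k => ⟨hxpos _, le_of_lt (hτ0 k)⟩
      obtain ⟨q, hqmem, τ1, hτ1mono, hτ1lim⟩ := (isCompact_Icc).tendsto_subseq hmem2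
      set τ : ℕ → ℕ := τ0 ∘ τ1 with hτdef
      have hτmono : StrictMono τ := hτ0mono.comp hτ1mono
      have hq0 : (0:ℝ) ≤ q := hqmem.1
      have haτ : Tendsto (fun k => x (σ (τ k))) atTop (𝓝 p) := hσlim.comp hτmono.tendsto_atTop
      have hbτ : Tendsto (fun k => b (τ k)) atTop (𝓝 q) := hτ1lim
      have hidx2 : Tendsto (fun k => σ (τ k)) atTop atTop :=
        hσmono.tendsto_atTop.comp hτmono.tendsto_atTop
      have hidx3 : Tendsto (fun k => σ (τ k) + 1) atTop atTop :=
        tendsto_atTop_mono (fun k => Nat.le_succ (σ (τ k))) hidx2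
      have l1 : Tendsto (fun k => d (σ (τ k))) atTop (𝓝 δ) := hdlim.comp hidx2
      have l1' : Tendsto (fun k => d (σ (τ k))) atTop (𝓝 (|φ q - φ p|)) := by
        have h1 := htendaux φ hφct (fun k => b (τ k)) q hq0 (fun k => hxpos _) hbτ
        have h2 := htendaux φ hφct (fun k => x (σ (τ k))) p hp0 (fun k => hxpos _) haτ
        exact (h1.sub h2).abs
      have e1 : |φ q - φ p| = δ := tendsto_nhds_unique l1' l1
      have l2 : Tendsto (fun k => d (σ (τ k) + 1)) atTop (𝓝 δ) := hdlim.comp hidx3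
      have l2' : Tendsto (fun k => d (σ (τ k) + 1)) atTop (𝓝 (|ψ q - ψ p|)) := by
        have h1 := htendaux ψ hψct (fun k => b (τ k)) q hq0 (fun k => hxpos _) hbτ
        have h2 := htendaux ψ hψct (fun k => x (σ (τ k))) p hp0 (fun k => hxpos _) haτ
        have heq : ∀ k, d (σ (τ k) + 1) = |ψ (b (τ k)) - ψ (x (σ (τ k)))| :=
          fun k => hdsucc (σ (τ k))
        simp only [heq]
        exact (h1.sub h2).abs
      have e2 : |ψ q - ψ p| = δ := tendsto_nhds_unique l2' l2
      have hpq : p ≠ q := by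
        intro hcontra
        rw [hcontra] at e1
        simp at e1
        exact hδne e1.symm
      rcases lt_or_gt_of_ne hpq with hlt | hlt
      · have hc := hcore p q hp0 (le_of_lt hlt)
        have hE := hEpos p q hp0 hlt
        have habs : |φ q - φ p| = φ q - φ p :=
          abs_of_nonneg (by linarith [hφsm hp0 (le_of_lt (lt_of_le_of_lt hp0 hlt) : q ∈ Set.Ici (0:ℝ)) hlt])
        linarith [e1, e2, habs ▸ e1]
      · have hc := hcore q p hq0 (le_of_lt hlt)
        have hE := hEpos q p hq0 hlt
        have habs : |φ q - φ p| = φ p - φ q := by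
          rw [abs_sub_comm]
          exact abs_of_nonneg (by linarith [hφsm hq0 (show p ∈ Set.Ici (0:ℝ) from hp0) hlt])
        have e2' : |ψ p - ψ q| = δ := by rw [abs_sub_comm]; exact e2
        linarith
  -- hence the defect tends to zero and p is a fixed value
  have hdzero : Tendsto d atTop (𝓝 0) := hδ0 ▸ hdlim
  have hdh : ∀ t, d t = |ψ (x t) - φ (x t)| := by
    intro t
    show |φ (x (t+1)) - φ (x t)| = _
    rw [htraj' t]
  have hhp : ψ p = φ p := by
    have l1 : Tendsto (fun k => d (σ k)) atTop (𝓝 0) := hdzero.comp hσmono.tendsto_atTop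
    have l2 : Tendsto (fun k => d (σ k)) atTop (𝓝 (|ψ p - φ p|)) := by
      have h1 := htendaux ψ hψct (fun k => x (σ k)) p hp0 (fun k => hxpos _) hσlim
      have h2 := htendaux φ hφct (fun k => x (σ k)) p hp0 (fun k => hxpos _) hσlim
      have heq : ∀ k, d (σ k) = |ψ (x (σ k)) - φ (x (σ k))| := fun k => hdh (σ k)
      simp only [heq]
      exact (h1.sub h2).abs
    have := tendsto_nhds_unique l2 l1
    have := abs_eq_zero.1 this
    linarith
  -- Lyapunov convergence to p
  set w : ℕ → ℝ := fun t => |φ (x t) - φ p| with hwdef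
  have hw_anti : Antitone w := by
    apply antitone_nat_of_succ_le
    intro t
    show |φ (x (t+1)) - φ p| ≤ |φ (x t) - φ p|
    rw [htraj' t]
    calc |ψ (x t) - φ p| = |ψ (x t) - ψ p| := by rw [hhp]
      _ ≤ |φ (x t) - φ p| := hweak p (x t) hp0 (hxpos t)
  have hwnn : ∀ t, 0 ≤ w t := fun t => abs_nonneg _
  have hw0 : Tendsto w atTop (𝓝 0) := by
    have hsubw : Tendsto (fun k => w (σ k)) atTop (𝓝 0) := by
      have h2 := htendaux φ hφct (fun k => x (σ k)) p hp0 (fun k => hxpos _) hσlim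
      have : Tendsto (fun k => |φ (x (σ k)) - φ p|) atTop (𝓝 (|φ p - φ p|)) :=
        (h2.sub tendsto_const_nhds).abs
      simpa using this
    have hbddw : BddBelow (Set.range w) := ⟨0, by rintro y ⟨t, rfl⟩; exact hwnn t⟩
    have hlimw : Tendsto w atTop (𝓝 (⨅ t, w t)) := tendsto_atTop_ciInf hw_anti hbddw
    have hinfw : (⨅ t, w t) = 0 :=
      tendsto_nhds_unique (hlimw.comp hσmono.tendsto_atTop) hsubw
    rwa [hinfw] at hlimw
  -- conclude x → p
  refine ⟨fun t => congrArg ρ (htraj t), p, ?_⟩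
  rw [Metric.tendsto_atTop]
  intro ε hε
  have hc1 : 0 < φ (p+ε) - φ p :=
    sub_pos.2 (hφsm hp0 (show p + ε ∈ Set.Ici (0:ℝ) by simp only [Set.mem_Ici]; linarith) (by linarith))
  by_cases hpe : ε ≤ p
  · have hpε0 : (0:ℝ) ≤ p - ε := by linarith
    have hc2 : 0 < φ p - φ (p-ε) :=
      sub_pos.2 (hφsm hpε0 hp0 (by linarith))
    set c := min (φ (p+ε) - φ p) (φ p - φ (p-ε)) with hcdef
    have hcpos : 0 < c := lt_min hc1 hc2
    obtain ⟨N, hN⟩ := (Metric.tendsto_atTop.1 hw0) c hcpos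
    refine ⟨N, fun t ht => ?_⟩
    have hwt : w t < c := by
      have := hN t ht
      rwa [Real.dist_eq, sub_zero, abs_of_nonneg (hwnn t)] at this
    rw [Real.dist_eq]
    by_contra hcon
    push_neg at hcon
    rcases le_abs.1 hcon with hcase | hcase
    · have hge : p + ε ≤ x t := by linarith
      have : φ (p+ε) ≤ φ (x t) :=
        hφmono (show p + ε ∈ Set.Ici (0:ℝ) by simp only [Set.mem_Ici]; linarith) (hxpos t) hge
      have h2 : φ (x t) - φ p ≤ w t := le_abs_self _
      have h3 : c ≤ φ (p+ε) - φ p := min_le_left _ _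
      linarith
    · have hle : x t ≤ p - ε := by linarith
      have : φ (x t) ≤ φ (p-ε) := hφmono (hxpos t) hpε0 hle
      have h2 : φ p - φ (x t) ≤ w t := by
        rw [hwdef]
        simp only
        rw [abs_sub_comm]
        exact le_abs_self _
      have h3 : c ≤ φ p - φ (p-ε) := min_le_right _ _
      linarith
  · push_neg at hpe
    obtain ⟨N, hN⟩ := (Metric.tendsto_atTop.1 hw0) _ hc1
    refine ⟨N, fun t ht => ?_⟩
    have hwt : w t < φ (p+ε) - φ p := by
      have := hN t ht
      rwa [Real.dist_eq, sub_zero, abs_of_nonneg (hwnn t)] at this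
    rw [Real.dist_eq]
    by_contra hcon
    push_neg at hcon
    rcases le_abs.1 hcon with hcase | hcase
    · have hge : p + ε ≤ x t := by linarith
      have : φ (p+ε) ≤ φ (x t) :=
        hφmono (show p + ε ∈ Set.Ici (0:ℝ) by simp only [Set.mem_Ici]; linarith) (hxpos t) hge
      have h2 : φ (x t) - φ p ≤ w t := le_abs_self _
      linarith
    · have : x t ≤ p - ε := by linarith
      have := hxpos t
      linarith
end

section
/- For the price dynamics λ(t+1) = c'((v')⁻¹(λ(t))) with cost c(x) = x^β and value v(x) = x^{1/α}, α, β > 1, the market's maximal relative risk-aversion equals η* = α(β−1)/(α−1); hence the dynamics are globally asymptotically stable if β < 2 − 1/α. -/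
open Filter Topology Real

lemma deriv2_rpow (b : ℝ) {x : ℝ} (hx : 0 < x) :
    deriv (deriv (fun y : ℝ => y ^ b)) x = b * (b - 1) * x ^ (b - 2) := by
  have h1 : deriv (fun y : ℝ => y ^ b) =ᶠ[𝓝 x] fun y => b * y ^ (b - 1) := by
    filter_upwards [isOpen_Ioi.mem_nhds hx] with y hy
    exact Real.deriv_rpow_const _ _
  rw [h1.deriv_eq, deriv_const_mul _ (Real.differentiableAt_rpow_const_of_ne _ hx.ne'),
    Real.deriv_rpow_const _ _]
  ring_nf

/-- for `c(x) = x^β`, `v(x) = x^{1/α}` with `α, β > 1`, the market's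
maximal relative risk-aversion equals `η* = α(β−1)/(α−1)` (the relative
risk-aversion is constant in `x`), and hence the price dynamics
`λ(t+1) = c'((v')⁻¹(λ(t)))`, i.e. `λ(t+1) = β(αλ(t))^{(αβ−α)/(1−α)}`, are
globally asymptotically stable whenever `β < 2 − 1/α`. -/
theorem stmt_5 (α β : ℝ) (hα : 1 < α) (hβ : 1 < β) :
    (∀ x > (0:ℝ),
      |(deriv (deriv (fun y : ℝ => y ^ β)) x / deriv (deriv (fun y : ℝ => y ^ (1/α))) x) *
        (deriv (fun y : ℝ => y ^ (1/α)) x / deriv (fun y : ℝ => y ^ β) x)|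
        = α * (β - 1) / (α - 1)) ∧
    (β < 2 - 1/α →
      ∃ lamstar : ℝ, 0 < lamstar ∧
        ∀ lam : ℕ → ℝ, 0 < lam 0 →
          (∀ t, lam (t + 1) = β * (α * lam t) ^ ((α * β - α) / (1 - α))) →
          Tendsto lam atTop (𝓝 lamstar)) := by
  have hα0 : (0:ℝ) < α := lt_trans one_pos hα
  have hβ0 : (0:ℝ) < β := lt_trans one_pos hβ
  constructor
  · intro x hx
    rw [deriv2_rpow β hx, deriv2_rpow (1/α) hx,
      Real.deriv_rpow_const _ _, Real.deriv_rpow_const _ _]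
    have hxβ2 : x ^ (β - 2) ≠ 0 := (Real.rpow_pos_of_pos hx _).ne'
    have hxa2 : x ^ (1/α - 2) ≠ 0 := (Real.rpow_pos_of_pos hx _).ne'
    have hxβ1 : x ^ (β - 1) ≠ 0 := (Real.rpow_pos_of_pos hx _).ne'
    have hxa1 : x ^ (1/α - 1) ≠ 0 := (Real.rpow_pos_of_pos hx _).ne'
    have hcomb : x ^ (β - 2) * x ^ (1/α - 1) = x ^ (1/α - 2) * x ^ (β - 1) := by
      rw [← Real.rpow_add hx, ← Real.rpow_add hx]; ring_nf
    have h1a : 1/α - 1 ≠ 0 := by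
      have : 1/α < 1 := by
        rw [div_lt_one hα0]; exact hα
      linarith
    have hXne : x ^ (β - 2) * x ^ (1/α - 1) ≠ 0 := mul_ne_zero hxβ2 hxa1
    have key : (β * (β - 1) * x ^ (β - 2) / (1/α * (1/α - 1) * x ^ (1/α - 2))) *
        (1/α * x ^ (1/α - 1) / (β * x ^ (β - 1))) = (β - 1) / (1/α - 1) := by
      rw [div_mul_div_comm]
      have e1 : β * (β - 1) * x ^ (β - 2) * (1/α * x ^ (1/α - 1)) =
          (β * (β - 1) * (1/α)) * (x ^ (β - 2) * x ^ (1/α - 1)) := by ring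
      have e2 : 1/α * (1/α - 1) * x ^ (1/α - 2) * (β * x ^ (β - 1)) =
          ((1/α) * (1/α - 1) * β) * (x ^ (β - 2) * x ^ (1/α - 1)) := by
        rw [hcomb]; ring
      rw [e1, e2, mul_div_mul_right _ _ hXne,
        div_eq_div_iff (mul_ne_zero (mul_ne_zero (one_div_ne_zero hα0.ne') h1a) hβ0.ne') h1a]
      ring
    rw [key]
    have hcast : (β - 1) / (1/α - 1) = -(α * (β - 1) / (α - 1)) := by
      rw [show α - 1 = -(1 - α) by ring, div_neg, neg_neg,
        div_eq_div_iff h1a (by linarith : (1:ℝ) - α ≠ 0)]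
      field_simp
    rw [hcast, abs_neg, abs_of_nonneg]
    apply div_nonneg
    · nlinarith
    · linarith
  · intro hlt
    set e : ℝ := (α * β - α) / (1 - α) with he
    have h1α : 1 - α < 0 := by linarith
    have henum : 0 < α * β - α := by nlinarith
    have heneg : e < 0 := div_neg_of_pos_of_neg henum h1α
    have hq : α * β < 2 * α - 1 := by
      have h2 := (mul_lt_mul_iff_right₀ hα0).2 hlt
      rw [mul_sub, mul_one_div, div_self hα0.ne'] at h2
      linarith
    have habs : |e| < 1 := by
      rw [abs_of_neg heneg, he, neg_lt, lt_div_iff_of_neg h1α]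
      linarith
    have h1e : (1:ℝ) - e ≠ 0 := by nlinarith [abs_nonneg e, neg_abs_le e]
    set C : ℝ := Real.log β + e * Real.log α with hC
    set μstar : ℝ := C / (1 - e) with hμstar
    refine ⟨Real.exp μstar, Real.exp_pos _, ?_⟩
    intro lam hlam0 hrec
    have hpos : ∀ t, 0 < lam t := by
      intro t; induction t with
      | zero => exact hlam0
      | succ n ih =>
          rw [hrec n]
          exact mul_pos hβ0 (Real.rpow_pos_of_pos (mul_pos hα0 ih) _)
    set μ : ℕ → ℝ := fun t => Real.log (lam t) with hμ
    have hμrec : ∀ t, μ (t + 1) = C + e * μ t := by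
      intro t
      have hαl : 0 < α * lam t := mul_pos hα0 (hpos t)
      simp only [hμ, hrec t]
      rw [Real.log_mul hβ0.ne' (Real.rpow_pos_of_pos hαl _).ne',
        Real.log_rpow hαl, Real.log_mul hα0.ne' (hpos t).ne', hC]
      ring
    have hfix : μstar = C + e * μstar := by
      rw [hμstar]; field_simp; ring
    have hgeo : ∀ t, μ t = μstar + e ^ t * (μ 0 - μstar) := by
      intro t; induction t with
      | zero => simp
      | succ n ih =>
          rw [hμrec n, ih, pow_succ]
          nlinarith [hfix]
    have hμtend : Tendsto μ atTop (𝓝 μstar) := by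
      have h0 : Tendsto (fun t : ℕ => e ^ t * (μ 0 - μstar)) atTop (𝓝 0) := by
        simpa using (tendsto_pow_atTop_nhds_zero_of_abs_lt_one habs).mul_const (μ 0 - μstar)
      have h1 := h0.const_add μstar
      rw [add_zero] at h1
      exact h1.congr fun t => (hgeo t).symm
    have : Tendsto (fun t => Real.exp (μ t)) atTop (𝓝 (Real.exp μstar)) :=
      (Real.continuous_exp.tendsto _).comp hμtend
    convert this using 2 with t
    exact (Real.exp_log (hpos t)).symm
end

section
/- For c(x) = x^β and v(x) = x^{1/α} with α, β > 1, the explicit price recursion is λ(t+1) = β (α λ(t))^{(αβ−α)/(1−α)}; consequently log λ(t) satisfies a linear recursion with slope (αβ−α)/(1−α), and the recursion converges for all positive initial prices if and only if |α(β−1)/(α−1)| < 1. -/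
open Filter Topology Real

lemma fixed_point_affine (a e : ℝ) (h : (1:ℝ) - e ≠ 0) :
    a + e * (a / (1 - e)) = a / (1 - e) := by
  field_simp
  ring

/-- Closed form for an affine recursion. -/
lemma affine_closed_form (a e : ℝ) (y : ℕ → ℝ) (ystar : ℝ)
    (hstar : a + e * ystar = ystar)
    (hrec : ∀ t, y (t + 1) = a + e * y t) :
    ∀ t, y t = ystar + e ^ t * (y 0 - ystar) := by
  intro t
  induction t with
  | zero => simp
  | succ t ih =>
    rw [hrec t, ih]
    ring_nf
    nlinarith [hstar]

/-- for `c(x) = x^β`, `v(x) = x^{1/α}` (`α, β > 1`), the explicit price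
recursion is `λ(t+1) = β(αλ(t))^{(αβ−α)/(1−α)}`; consequently `log λ(t)` satisfies a
linear recursion with slope `(αβ−α)/(1−α)`, and the recursion converges for all
positive initial prices iff `|α(β−1)/(α−1)| < 1`. -/
theorem stmt_6 (α β : ℝ) (hα : 1 < α) (hβ : 1 < β) :
    (∀ lam : ℝ, 0 < lam →
      deriv (fun x : ℝ => x ^ β) ((α * lam) ^ (α / (1 - α)))
        = β * (α * lam) ^ ((α * β - α) / (1 - α))) ∧
    (∀ lam : ℕ → ℝ, (∀ t, 0 < lam t) →
      (∀ t, lam (t + 1) = β * (α * lam t) ^ ((α * β - α) / (1 - α))) →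
      ∀ t, Real.log (lam (t + 1))
        = Real.log β + ((α * β - α) / (1 - α)) * Real.log (α * lam t)) ∧
    ((∀ lam : ℕ → ℝ, 0 < lam 0 →
        (∀ t, lam (t + 1) = β * (α * lam t) ^ ((α * β - α) / (1 - α))) →
        ∃ L : ℝ, Tendsto lam atTop (𝓝 L))
      ↔ |α * (β - 1) / (α - 1)| < 1) := by
  have hα0 : (0:ℝ) < α := by linarith
  have hβ0 : (0:ℝ) < β := by linarith
  set e : ℝ := (α * β - α) / (1 - α) with he
  have he_neg : e < 0 := by
    apply div_neg_of_pos_of_neg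
    · nlinarith
    · linarith
  have habs : |α * (β - 1) / (α - 1)| = -e := by
    have h1 : α * (β - 1) / (α - 1) = -e := by
      have h1α : (1:ℝ) - α ≠ 0 := by linarith
      have h2α : α - 1 ≠ 0 := by linarith
      rw [he]
      field_simp
      ring
    rw [h1, abs_of_pos]
    linarith
  refine ⟨?_, ?_, ?_⟩
  · intro lam hlam
    have hbase : (0:ℝ) < α * lam := by positivity
    have hz : (0:ℝ) < (α * lam) ^ (α / (1 - α)) := Real.rpow_pos_of_pos hbase _
    rw [Real.deriv_rpow_const]
    rw [← Real.rpow_mul hbase.le]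
    have hexp : α / (1 - α) * (β - 1) = (α * β - α) / (1 - α) := by ring
    rw [hexp]
  · intro lam hpos hrec t
    have hbase : (0:ℝ) < α * lam t := mul_pos hα0 (hpos t)
    rw [hrec t, Real.log_mul hβ0.ne' (Real.rpow_pos_of_pos hbase _).ne',
      Real.log_rpow hbase]
  · -- part 3
    have hlogrec : ∀ lam : ℕ → ℝ, (∀ t, 0 < lam t) →
        (∀ t, lam (t + 1) = β * (α * lam t) ^ e) →
        ∀ t, Real.log (lam (t + 1)) =
          (Real.log β + e * Real.log α) + e * Real.log (lam t) := by
      intro lam hpos hrec t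
      have hbase : (0:ℝ) < α * lam t := mul_pos hα0 (hpos t)
      rw [hrec t, Real.log_mul hβ0.ne' (Real.rpow_pos_of_pos hbase _).ne',
        Real.log_rpow hbase, Real.log_mul hα0.ne' (hpos t).ne']
      ring
    set a : ℝ := Real.log β + e * Real.log α with ha
    have he1 : e ≠ 1 := by linarith
    have hne : (1:ℝ) - e ≠ 0 := by linarith
    set ystar : ℝ := a / (1 - e) with hystar
    have hstar : a + e * ystar = ystar := fixed_point_affine a e hne
    have hstar' : Real.log β + e * Real.log α + e * ystar = ystar := by
      rw [ha] at hstar; linarith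
    constructor
    · -- forward, by contraposition
      intro hall
      by_contra hcon
      rw [habs, not_lt] at hcon
      have hele : e ≤ -1 := by linarith
      -- construct explicit diverging sequence
      set lam : ℕ → ℝ := fun t => Real.exp (ystar + e ^ t) with hlam
      have hpos : ∀ t, 0 < lam t := fun t => Real.exp_pos _
      have hrec : ∀ t, lam (t + 1) = β * (α * lam t) ^ e := by
        intro t
        have hbase : (0:ℝ) < α * lam t := by positivity
        have hR : (0:ℝ) < β * (α * lam t) ^ e := by positivity
        have hlog : Real.log (β * (α * lam t) ^ e) = ystar + e ^ (t+1) := by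
          rw [Real.log_mul hβ0.ne' (Real.rpow_pos_of_pos hbase _).ne',
            Real.log_rpow hbase, Real.log_mul hα0.ne' (hpos t).ne',
            hlam]
          simp only [Real.log_exp]
          rw [pow_succ]
          linarith [hstar', mul_comm e (e ^ t)]
        have := Real.exp_log hR
        rw [hlog] at this
        rw [hlam]
        exact this
      obtain ⟨L, hL⟩ := hall lam (hpos 0) hrec
      have he2 : (1:ℝ) ≤ e ^ 2 := by nlinarith
      have heven : ∀ t, Real.exp (ystar + 1) ≤ lam (2 * t) := by
        intro t
        rw [hlam]
        simp only
        apply Real.exp_le_exp.mpr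
        have : (1:ℝ) ≤ e ^ (2 * t) := by
          rw [pow_mul]
          exact one_le_pow₀ he2
        linarith
      have hodd : ∀ t, lam (2 * t + 1) ≤ Real.exp (ystar - 1) := by
        intro t
        rw [hlam]
        simp only
        apply Real.exp_le_exp.mpr
        have h2 : e ^ (2 * t + 1) ≤ -1 := by
          have h1 : (1:ℝ) ≤ e ^ (2 * t) := by
            rw [pow_mul]; exact one_le_pow₀ he2
          have := pow_succ e (2 * t)
          nlinarith
        linarith
      have h2t : Tendsto (fun t : ℕ => 2 * t) atTop atTop :=
        Filter.tendsto_atTop_atTop.mpr fun b => ⟨b, fun n hn => by omega⟩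
      have h2t1 : Tendsto (fun t : ℕ => 2 * t + 1) atTop atTop :=
        Filter.tendsto_atTop_atTop.mpr fun b => ⟨b, fun n hn => by omega⟩
      have hLeven : Tendsto (fun t => lam (2 * t)) atTop (𝓝 L) := hL.comp h2t
      have hLodd : Tendsto (fun t => lam (2 * t + 1)) atTop (𝓝 L) := hL.comp h2t1
      have h1 : Real.exp (ystar + 1) ≤ L :=
        le_of_tendsto_of_tendsto' tendsto_const_nhds hLeven heven
      have h2 : L ≤ Real.exp (ystar - 1) :=
        le_of_tendsto_of_tendsto' hLodd tendsto_const_nhds hodd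
      have : Real.exp (ystar - 1) < Real.exp (ystar + 1) :=
        Real.exp_lt_exp.mpr (by linarith)
      linarith
    · -- backward
      intro hlt lam hpos0 hrec
      have habs' : |e| < 1 := by
        rw [abs_of_neg he_neg]; rw [habs] at hlt; linarith
      have hpos : ∀ t, 0 < lam t := by
        intro t
        induction t with
        | zero => exact hpos0
        | succ t ih =>
          rw [hrec t]
          positivity
      have hcf : ∀ t, Real.log (lam t) =
          ystar + e ^ t * (Real.log (lam 0) - ystar) :=
        affine_closed_form a e (fun t => Real.log (lam t)) ystar hstar
          (hlogrec lam hpos hrec)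
      refine ⟨Real.exp ystar, ?_⟩
      have hlt' : Tendsto (fun t : ℕ => e ^ t) atTop (𝓝 0) :=
        tendsto_pow_atTop_nhds_zero_of_abs_lt_one habs'
      have hlog_tendsto : Tendsto (fun t => Real.log (lam t)) atTop (𝓝 ystar) := by
        have : Tendsto (fun t : ℕ => ystar + e ^ t * (Real.log (lam 0) - ystar))
            atTop (𝓝 (ystar + 0 * (Real.log (lam 0) - ystar))) :=
          tendsto_const_nhds.add (hlt'.mul tendsto_const_nhds)
        simp only [zero_mul, add_zero] at this
        exact Tendsto.congr (fun t => (hcf t).symm) this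
      have := (Real.continuous_exp.tendsto ystar).comp hlog_tendsto
      refine this.congr fun t => ?_
      simp [Real.exp_log (hpos t)]
end

section
/- Let x : ℤ₊ → ℝ satisfy g(x(t+1)) = f(x(t), x(t−1), …, x(t−n)) with f ∈ C¹(ℝ^{n+1}), g ∈ C¹ monotone, and |∂f/∂y_k(y)| ≤ θ_k |g'(y_k)| for all y ∈ ℝ^{n+1}, with Σ_{k} θ_k ≤ 1. Then there is γ₀ ≥ 0 depending only on the initial states such that the set Ω₀ = {x ∈ ℝ : ∃z ∈ ℝⁿ, |g(x) − f(x,z)| ≤ γ₀} is invariant: if x(T−n), …, x(T) ∈ Ω₀ then x(t) ∈ Ω₀ for all t > T. -/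
open Set Finset

/-- invariance for the higher-order implicit system
`g(x(t+1)) = f(x(t), …, x(t−n))` with `|∂f/∂y_k| ≤ θ_k|g'(y_k)|` and `Σθ_k ≤ 1`:
there exists `γ₀ ≥ 0` (depending only on the initial states) such that
`Ω₀ = {x | ∃ z, |g x − f (x, z)| ≤ γ₀}` is invariant. -/
theorem stmt_7 (n : ℕ) (g : ℝ → ℝ) (f : (Fin (n + 1) → ℝ) → ℝ)
    (θ : Fin (n + 1) → ℝ)
    (hg : ContDiff ℝ 1 g) (hgmono : Monotone g ∨ Antitone g)
    (hf : ContDiff ℝ 1 f)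
    (hθ : ∀ k, 0 ≤ θ k) (hθsum : ∑ k, θ k ≤ 1)
    (hbound : ∀ (y : Fin (n + 1) → ℝ) (k : Fin (n + 1)),
      |fderiv ℝ f y (Pi.single k 1)| ≤ θ k * |deriv g (y k)|)
    (x : ℕ → ℝ)
    (htraj : ∀ t, g (x (t + n + 1)) = f (fun k : Fin (n + 1) => x (t + n - k.val))) :
    ∃ γ₀ : ℝ, 0 ≤ γ₀ ∧
      (∀ T, n ≤ T →
        (∀ j ≤ n, x (T - j) ∈ {y : ℝ | ∃ z : Fin n → ℝ, |g y - f (Fin.cons y z)| ≤ γ₀}) →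
        ∀ t, T < t → x t ∈ {y : ℝ | ∃ z : Fin n → ℝ, |g y - f (Fin.cons y z)| ≤ γ₀}) := by
  have hfd : Differentiable ℝ f := hf.differentiable one_ne_zero
  have hgd : Differentiable ℝ g := hg.differentiable one_ne_zero
  have mono_deriv : ∀ h : ℝ → ℝ, Differentiable ℝ h → Monotone h → ∀ s, 0 ≤ deriv h s := by
    intro h hhd hm s
    have hs := (hhd s).hasDerivAt
    rw [hasDerivAt_iff_tendsto_slope] at hs
    have hsub : Set.Ioi s ⊆ {s}ᶜ := fun y hy => ne_of_gt hy
    have hs' : Filter.Tendsto (slope h s) (nhdsWithin s (Set.Ioi s)) (nhds (deriv h s)) :=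
      hs.mono_left (nhdsWithin_mono s hsub)
    refine ge_of_tendsto hs' ?_
    filter_upwards [self_mem_nhdsWithin] with y hy
    rw [slope_def_field]
    exact div_nonneg (by linarith [hm (le_of_lt hy)]) (by linarith [Set.mem_Ioi.mp hy])
  -- generic one-variable mean value bound
  have key : ∀ (φ G : ℝ → ℝ), Differentiable ℝ φ → Differentiable ℝ G →
      (∀ s, |deriv φ s| ≤ deriv G s) → ∀ a b : ℝ, a ≤ b → |φ b - φ a| ≤ G b - G a := by
    intro φ G hφ hG h a b hab
    have m1 : Monotone (fun s => G s - φ s) := by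
      apply monotone_of_deriv_nonneg (hG.sub hφ)
      intro s
      rw [deriv_sub (hG s) (hφ s)]
      have := abs_le.mp (h s)
      linarith [this.2]
    have m2 : Monotone (fun s => G s + φ s) := by
      apply monotone_of_deriv_nonneg (hG.add hφ)
      intro s
      rw [deriv_add (hG s) (hφ s)]
      have := abs_le.mp (h s)
      linarith [this.1]
    have h1 := m1 hab
    have h2 := m2 hab
    simp only at h1 h2
    rw [abs_le]
    constructor <;> linarith
  -- Lemma A : single-coordinate variation
  have lemA : ∀ (c : Fin (n+1) → ℝ) (k : Fin (n+1)) (a b : ℝ),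
      |f (Function.update c k b) - f (Function.update c k a)| ≤ θ k * |g b - g a| := by
    intro c k a b
    have hu : ∀ s : ℝ, Function.update c k s
        = (Function.update c k 0) + s • (Pi.single k 1 : Fin (n+1) → ℝ) := by
      intro s; funext j
      by_cases hj : j = k
      · subst hj; simp
      · simp [Function.update_of_ne hj, Pi.single_eq_of_ne hj]
    set φ : ℝ → ℝ := fun s => f (Function.update c k s) with hφdef
    have hderφ : ∀ s : ℝ, HasDerivAt φ
        (fderiv ℝ f (Function.update c k s) (Pi.single k 1)) s := by
      intro s
      have h1 : HasDerivAt (fun s : ℝ => Function.update c k 0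
          + s • (Pi.single k 1 : Fin (n+1) → ℝ)) (Pi.single k 1) s := by
        simpa using
          (((hasDerivAt_id s).smul_const (Pi.single k 1 : Fin (n+1) → ℝ)).const_add
            (Function.update c k 0))
      have h2 := (hfd (Function.update c k s)).hasFDerivAt.comp_hasDerivAt s
        (by simpa [← hu] using h1)
      exact h2
    have hφd : Differentiable ℝ φ := fun s => (hderφ s).differentiableAt
    have hφder : ∀ s, |deriv φ s| ≤ θ k * |deriv g s| := by
      intro s; rw [(hderφ s).deriv]
      simpa using hbound (Function.update c k s) k
    have main : ∀ a b : ℝ, a ≤ b → |φ b - φ a| ≤ θ k * |g b - g a| := by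
      intro a b hab
      rcases hgmono with hm | hm
      · have hG : ∀ s, deriv (fun s => θ k * g s) s = θ k * deriv g s := by
          intro s; rw [deriv_const_mul _ (hgd s)]
        have hb : ∀ s, |deriv φ s| ≤ deriv (fun s => θ k * g s) s := by
          intro s; rw [hG s]
          calc |deriv φ s| ≤ θ k * |deriv g s| := hφder s
            _ = θ k * deriv g s := by
                rw [abs_of_nonneg (mono_deriv g hgd hm s)]
        have := key φ (fun s => θ k * g s) hφd (hgd.const_mul _) hb a b hab
        calc |φ b - φ a| ≤ θ k * g b - θ k * g a := this
          _ = θ k * (g b - g a) := by ring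
          _ = θ k * |g b - g a| := by rw [abs_of_nonneg (by linarith [hm hab])]
      · have hG : ∀ s, deriv (fun s => θ k * (- g s)) s = θ k * (- deriv g s) := by
          intro s
          rw [deriv_const_mul (d := fun y => -g y) _ (hgd s).neg, deriv.fun_neg]
        have hb : ∀ s, |deriv φ s| ≤ deriv (fun s => θ k * (- g s)) s := by
          intro s; rw [hG s]
          calc |deriv φ s| ≤ θ k * |deriv g s| := hφder s
            _ = θ k * (- deriv g s) := by
                have h0 : 0 ≤ deriv (fun y => - g y) s := mono_deriv _ hgd.neg
                  (fun u v huv => neg_le_neg (hm huv)) s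
                rw [deriv.fun_neg] at h0
                rw [abs_of_nonpos (by linarith)]
        have := key φ (fun s => θ k * (- g s)) hφd ((hgd.neg).const_mul _) hb a b hab
        calc |φ b - φ a| ≤ θ k * (- g b) - θ k * (- g a) := this
          _ = θ k * (g a - g b) := by ring
          _ = θ k * |g b - g a| := by
              rw [abs_of_nonpos (by linarith [hm hab])]; ring
    rcases le_total a b with hab | hab
    · exact main a b hab
    · rw [abs_sub_comm, abs_sub_comm (g b)]
      exact main b a hab
  -- Lemma B : multivariate variation
  have lemB : ∀ a b : Fin (n+1) → ℝ,
      |f b - f a| ≤ ∑ k, θ k * |g (b k) - g (a k)| := by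
    intro a b
    have H : ∀ s : Finset (Fin (n+1)),
        |f (fun k => if k ∈ s then b k else a k) - f a|
          ≤ ∑ k ∈ s, θ k * |g (b k) - g (a k)| := by
      intro s
      induction s using Finset.induction_on with
      | empty => simp
      | @insert j t hj ih =>
        have hnew : (fun k => if k ∈ insert j t then b k else a k)
            = Function.update (fun k => if k ∈ t then b k else a k) j (b j) := by
          funext k
          by_cases hk : k = j
          · subst hk; simp
          · simp [Function.update_of_ne hk, Finset.mem_insert, hk]
        have hold : (fun k => if k ∈ t then b k else a k)
            = Function.update (fun k => if k ∈ t then b k else a k) j (a j) := by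
          funext k
          by_cases hk : k = j
          · subst hk; simp [hj]
          · simp [Function.update_of_ne hk]
        have hA : |f (fun k => if k ∈ insert j t then b k else a k)
            - f (fun k => if k ∈ t then b k else a k)| ≤ θ j * |g (b j) - g (a j)| := by
          rw [hnew]
          nth_rewrite 2 [hold]
          exact lemA _ j (a j) (b j)
        calc |f (fun k => if k ∈ insert j t then b k else a k) - f a|
            ≤ |f (fun k => if k ∈ insert j t then b k else a k)
                - f (fun k => if k ∈ t then b k else a k)|
              + |f (fun k => if k ∈ t then b k else a k) - f a| := abs_sub_le _ _ _
          _ ≤ θ j * |g (b j) - g (a j)| + ∑ k ∈ t, θ k * |g (b k) - g (a k)| :=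
              add_le_add hA ih
          _ = ∑ k ∈ insert j t, θ k * |g (b k) - g (a k)| := by rw [Finset.sum_insert hj]
    have := H Finset.univ
    simpa using this
  -- contraction of increments
  set d : ℕ → ℝ := fun t => |g (x (t+1)) - g (x t)| with hd
  set M : ℝ := ∑ s ∈ Finset.range (n+1), d s with hM
  have hM0 : 0 ≤ M := Finset.sum_nonneg fun s _ => abs_nonneg _
  have hdM : ∀ t, d t ≤ M := by
    intro t
    induction t using Nat.strong_induction_on with
    | _ t ih =>
      rcases le_or_gt t n with hc | hc
      · exact Finset.single_le_sum (fun s _ => abs_nonneg _)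
          (Finset.mem_range.mpr (by omega))
      · obtain ⟨u, rfl⟩ : ∃ u, t = u + n + 1 := ⟨t - n - 1, by omega⟩
        have e0 := htraj u
        have e1 := htraj (u + 1)
        have e2 : u + 1 + n + 1 = u + n + 1 + 1 := by omega
        rw [e2] at e1
        have step : d (u + n + 1)
            ≤ ∑ k : Fin (n+1), θ k * |g (x (u + 1 + n - k.val)) - g (x (u + n - k.val))| := by
          rw [hd]
          simp only
          rw [e1, e0]
          exact lemB _ _
        have step2 : ∀ k : Fin (n+1),
            θ k * |g (x (u + 1 + n - k.val)) - g (x (u + n - k.val))| ≤ θ k * M := by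
          intro k
          have hk : k.val ≤ n := Nat.lt_succ_iff.mp k.isLt
          have e3 : u + 1 + n - k.val = (u + n - k.val) + 1 := by omega
          rw [e3]
          have := ih (u + n - k.val) (by omega)
          exact mul_le_mul_of_nonneg_left this (hθ k)
        calc d (u + n + 1) ≤ ∑ k : Fin (n+1), θ k * |g (x (u + 1 + n - k.val)) - g (x (u + n - k.val))| := step
          _ ≤ ∑ k : Fin (n+1), θ k * M := Finset.sum_le_sum fun k _ => step2 k
          _ = (∑ k, θ k) * M := by rw [Finset.sum_mul]
          _ ≤ 1 * M := mul_le_mul_of_nonneg_right hθsum hM0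
          _ = M := one_mul M
  refine ⟨M, hM0, ?_⟩
  intro T hT _ t ht
  have htn : n + 1 ≤ t := by omega
  refine ⟨fun j : Fin n => x (t - 1 - j.val), ?_⟩
  have hx : (Fin.cons (x t) (fun j : Fin n => x (t - 1 - j.val)) : Fin (n+1) → ℝ)
      = fun k : Fin (n+1) => x (t - n + n - k.val) := by
    funext k
    refine Fin.cases ?_ ?_ k
    · simp only [Fin.cons_zero, Fin.val_zero]
      congr 1; omega
    · intro j
      simp only [Fin.cons_succ, Fin.val_succ]
      congr 1
      have : j.val < n := j.isLt
      omega
  have e4 : t - n + n + 1 = t + 1 := by omega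
  have e5 := htraj (t - n)
  rw [e4] at e5
  show |g (x t) - f (Fin.cons (x t) fun j : Fin n => x (t - 1 - j.val))| ≤ M
  rw [hx, ← e5, abs_sub_comm]
  exact hdM t
end

section
/- For n = 1 and the system g(x(t+1)) = f(x(t), x(t−1)) with |∂₁f| ≤ θ₁|g'| and |∂₂f| ≤ θ₂|g'| pointwise, the function V(x, z) = |g(x) − f(x, z)| satisfies V(x(t+1), x(t)) − V(x(t), x(t−1)) ≤ θ₂|Δg_{t−1}| + (θ₁ − 1)|Δg_t| along trajectories, where Δg_t = g(x(t+1)) − g(x(t)). -/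
private lemma mono_deriv_nonneg (g : ℝ → ℝ) (hgm : Monotone g)
    (hd : Differentiable ℝ g) (y : ℝ) : 0 ≤ deriv g y := by
  have hs : Filter.Tendsto (slope g y) (nhdsWithin y {y}ᶜ) (nhds (deriv g y)) :=
    hasDerivAt_iff_tendsto_slope.1 (hd y).hasDerivAt
  refine ge_of_tendsto hs ?_
  filter_upwards with z
  rw [slope_def_field]
  rcases le_or_gt y z with hz | hz
  · exact div_nonneg (sub_nonneg.2 (hgm hz)) (sub_nonneg.2 hz)
  · exact div_nonneg_of_nonpos (sub_nonpos.2 (hgm hz.le))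
      (sub_nonpos.2 hz.le)

private lemma lip_mono (g h : ℝ → ℝ) (θ : ℝ)
    (hg : Differentiable ℝ g) (hh : Differentiable ℝ h) (hgm : Monotone g)
    (hb : ∀ x, |deriv h x| ≤ θ * |deriv g x|) (a c : ℝ) (hac : a ≤ c) :
    |h c - h a| ≤ θ * (g c - g a) := by
  have hkey : ∀ s : ℝ, s = 1 ∨ s = -1 →
      Monotone (fun x => θ * g x + s * h x) := by
    intro s hs
    apply monotone_of_deriv_nonneg
    · exact (hg.const_mul θ).add (hh.const_mul s)
    · intro y
      have hd : deriv (fun x => θ * g x + s * h x) y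
          = θ * deriv g y + s * deriv h y := by
        rw [deriv_fun_add ((hg y).const_mul θ) ((hh y).const_mul s),
          deriv_const_mul θ (hg y), deriv_const_mul s (hh y)]
      rw [hd]
      have h1 := hb y
      have h2 : |deriv g y| = deriv g y :=
        abs_of_nonneg (mono_deriv_nonneg g hgm hg y)
      rw [h2] at h1
      have h3 : -|deriv h y| ≤ s * deriv h y := by
        rcases hs with rfl | rfl
        · simpa using neg_abs_le (deriv h y)
        · simpa using le_abs_self (deriv h y)
      linarith
  have hm1 := hkey 1 (Or.inl rfl) hac
  have hm2 := hkey (-1) (Or.inr rfl) hac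
  simp only at hm1 hm2
  rw [abs_sub_le_iff]
  constructor <;> nlinarith
private lemma lip_abs (g h : ℝ → ℝ) (θ : ℝ)
    (hg : Differentiable ℝ g) (hh : Differentiable ℝ h)
    (hgm : Monotone g ∨ Antitone g)
    (hb : ∀ x, |deriv h x| ≤ θ * |deriv g x|) (a c : ℝ) :
    |h a - h c| ≤ θ * |g a - g c| := by
  wlog hac : c ≤ a generalizing a c
  · rw [abs_sub_comm (h a), abs_sub_comm (g a)]
    exact this c a (le_of_not_ge hac)
  rcases hgm with hm | ha
  · rw [abs_of_nonneg (sub_nonneg.2 (hm hac))]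
    exact lip_mono g h θ hg hh hm hb c a hac
  · have hm : Monotone (fun y => -g y) := fun u v huv => neg_le_neg (ha huv)
    have hb' : ∀ y, |deriv h y| ≤ θ * |deriv (fun y => -g y) y| := by
      intro y
      rw [deriv.fun_neg, abs_neg]; exact hb y
    have h5 := lip_mono (fun y => -g y) h θ hg.neg hh hm hb' c a hac
    rw [abs_of_nonpos (sub_nonpos.2 (ha hac))]
    nlinarith [h5]

/-- for the second-order system `g(x(t+1)) = f(x(t), x(t−1))` with
`|∂₁f| ≤ θ₁|g'|`, `|∂₂f| ≤ θ₂|g'|`, the function `V(x,z) = |g x − f (x,z)|`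
satisfies the dissipation inequality
`V(x(t+1), x(t)) − V(x(t), x(t−1)) ≤ θ₂|Δg_{t−1}| + (θ₁ − 1)|Δg_t|`. -/
theorem stmt_9 (g : ℝ → ℝ) (f : ℝ → ℝ → ℝ) (θ₁ θ₂ : ℝ)
    (hg : ContDiff ℝ 1 g) (hgmono : Monotone g ∨ Antitone g)
    (hf : ContDiff ℝ 1 (fun p : ℝ × ℝ => f p.1 p.2))
    (hθ₁ : 0 ≤ θ₁) (hθ₂ : 0 ≤ θ₂)
    (hb1 : ∀ x z : ℝ, |deriv (fun x' => f x' z) x| ≤ θ₁ * |deriv g x|)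
    (hb2 : ∀ x z : ℝ, |deriv (fun z' => f x z') z| ≤ θ₂ * |deriv g z|)
    (x : ℕ → ℝ)
    (htraj : ∀ t, g (x (t + 2)) = f (x (t + 1)) (x t)) :
    ∀ t, |g (x (t + 2)) - f (x (t + 2)) (x (t + 1))|
        - |g (x (t + 1)) - f (x (t + 1)) (x t)|
      ≤ θ₂ * |g (x (t + 1)) - g (x t)|
        + (θ₁ - 1) * |g (x (t + 2)) - g (x (t + 1))| := by
  intro t
  have hgd : Differentiable ℝ g := hg.differentiable one_ne_zero
  have hfd : Differentiable ℝ (fun p : ℝ × ℝ => f p.1 p.2) :=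
    hf.differentiable one_ne_zero
  have hfx : ∀ z, Differentiable ℝ (fun x' => f x' z) := by
    intro z
    exact hfd.comp (differentiable_id.prodMk (differentiable_const z))
  have hfz : ∀ a, Differentiable ℝ (fun z' => f a z') := by
    intro a
    exact hfd.comp ((differentiable_const a).prodMk differentiable_id)
  -- second term equals |Δg_t|
  have h2 : |g (x (t + 1)) - f (x (t + 1)) (x t)|
      = |g (x (t + 2)) - g (x (t + 1))| := by
    rw [← htraj t, abs_sub_comm]
  -- bound first term
  have hstep1 : |f (x (t + 1)) (x t) - f (x (t + 2)) (x t)|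
      ≤ θ₁ * |g (x (t + 1)) - g (x (t + 2))| :=
    lip_abs g (fun x' => f x' (x t)) θ₁ hgd (hfx _) hgmono
      (fun y => hb1 y (x t)) _ _
  have hstep2 : |f (x (t + 2)) (x t) - f (x (t + 2)) (x (t + 1))|
      ≤ θ₂ * |g (x t) - g (x (t + 1))| :=
    lip_abs g (fun z' => f (x (t + 2)) z') θ₂ hgd (hfz _) hgmono
      (fun y => hb2 (x (t + 2)) y) _ _
  have h1 : |g (x (t + 2)) - f (x (t + 2)) (x (t + 1))|
      ≤ θ₁ * |g (x (t + 2)) - g (x (t + 1))|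
        + θ₂ * |g (x (t + 1)) - g (x t)| := by
    nth_rewrite 1 [htraj t]
    calc |f (x (t + 1)) (x t) - f (x (t + 2)) (x (t + 1))|
        ≤ |f (x (t + 1)) (x t) - f (x (t + 2)) (x t)|
          + |f (x (t + 2)) (x t) - f (x (t + 2)) (x (t + 1))| :=
          abs_sub_le _ _ _
      _ ≤ θ₁ * |g (x (t + 1)) - g (x (t + 2))|
          + θ₂ * |g (x t) - g (x (t + 1))| := add_le_add hstep1 hstep2
      _ = θ₁ * |g (x (t + 2)) - g (x (t + 1))|
          + θ₂ * |g (x (t + 1)) - g (x t)| := by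
          rw [abs_sub_comm (g (x (t + 1)))  (g (x (t + 2))),
            abs_sub_comm (g (x t))]
  rw [h2]
  linarith
end

section
/- Let x(t+1) be defined implicitly by g(x(t+1)) = f(x(t), u(t)) with |u(t)| ≤ κ, where |∂f/∂u(x,u)| ≤ 1 and |∂f/∂x(x,u)| ≤ θ|g'(x)| for all x ∈ ℝ, u ∈ [−κ,κ], with θ ∈ [0,1). Then the set Ω(θ) = {x : | |f(x,ν) − g(x)| − |ν| | ≤ κ(1+θ)/(1−θ) for all ν ∈ [−κ,κ]} is invariant under the dynamics. -/
open Set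

lemma mono_deriv_nonneg' {g : ℝ → ℝ} (hm : Monotone g) (z : ℝ)
    (hd : DifferentiableAt ℝ g z) : 0 ≤ deriv g z := by
  have h := hd.hasDerivAt
  rw [hasDerivAt_iff_tendsto_slope] at h
  have h' : Filter.Tendsto (slope g z) (nhdsWithin z (Ioi z)) (nhds (deriv g z)) :=
    h.mono_left (nhdsWithin_mono z (fun w hw => ne_of_gt hw))
  refine ge_of_tendsto h' ?_
  filter_upwards [self_mem_nhdsWithin] with w hw
  have hwz : (0:ℝ) < w - z := sub_pos.mpr hw
  have : 0 ≤ g w - g z := sub_nonneg.mpr (hm (le_of_lt hw))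
  simpa [slope_def_field, div_eq_mul_inv] using div_nonneg this hwz.le

lemma key_lip {g φ : ℝ → ℝ} {θ : ℝ}
    (hgd : Differentiable ℝ g) (hφd : Differentiable ℝ φ)
    (hgm : Monotone g)
    (hb : ∀ z, |deriv φ z| ≤ θ * |deriv g z|) (a b : ℝ) :
    |φ b - φ a| ≤ θ * |g b - g a| := by
  have hg' : ∀ z, 0 ≤ deriv g z := fun z => mono_deriv_nonneg' hgm z (hgd z)
  have hb' : ∀ z, |deriv φ z| ≤ θ * deriv g z := by
    intro z; have := hb z; rwa [abs_of_nonneg (hg' z)] at this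
  -- WLOG a ≤ b
  rcases le_total a b with hab | hab
  · have hgab : g a ≤ g b := hgm hab
    rw [abs_of_nonneg (sub_nonneg.mpr hgab)]
    have m1 : Monotone (fun z => θ * g z - φ z) := by
      apply monotone_of_deriv_nonneg (((hgd.const_mul θ).sub hφd))
      intro z
      have hdz : deriv (fun z => θ * g z - φ z) z = θ * deriv g z - deriv φ z := by
        rw [deriv_fun_sub ((hgd z).const_mul θ) (hφd z), deriv_const_mul θ (hgd z)]
      show 0 ≤ deriv (fun z => θ * g z - φ z) z; rw [hdz]
      have := (abs_le.mp (hb' z)).2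
      linarith
    have m2 : Monotone (fun z => θ * g z + φ z) := by
      apply monotone_of_deriv_nonneg (((hgd.const_mul θ).add hφd))
      intro z
      have hdz : deriv (fun z => θ * g z + φ z) z = θ * deriv g z + deriv φ z := by
        rw [deriv_fun_add ((hgd z).const_mul θ) (hφd z), deriv_const_mul θ (hgd z)]
      show 0 ≤ deriv (fun z => θ * g z + φ z) z; rw [hdz]
      have := (abs_le.mp (hb' z)).1
      linarith
    have h1 := m1 hab
    have h2 := m2 hab
    simp only at h1 h2
    rw [abs_le]; constructor <;> linarith
  · have hgab : g b ≤ g a := hgm hab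
    rw [abs_sub_comm (φ b), abs_sub_comm (g b)]
    rw [abs_of_nonneg (sub_nonneg.mpr hgab)]
    have m1 : Monotone (fun z => θ * g z - φ z) := by
      apply monotone_of_deriv_nonneg (((hgd.const_mul θ).sub hφd))
      intro z
      have hdz : deriv (fun z => θ * g z - φ z) z = θ * deriv g z - deriv φ z := by
        rw [deriv_fun_sub ((hgd z).const_mul θ) (hφd z), deriv_const_mul θ (hgd z)]
      show 0 ≤ deriv (fun z => θ * g z - φ z) z; rw [hdz]
      have := (abs_le.mp (hb' z)).2
      linarith
    have m2 : Monotone (fun z => θ * g z + φ z) := by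
      apply monotone_of_deriv_nonneg (((hgd.const_mul θ).add hφd))
      intro z
      have hdz : deriv (fun z => θ * g z + φ z) z = θ * deriv g z + deriv φ z := by
        rw [deriv_fun_add ((hgd z).const_mul θ) (hφd z), deriv_const_mul θ (hgd z)]
      show 0 ≤ deriv (fun z => θ * g z + φ z) z; rw [hdz]
      have := (abs_le.mp (hb' z)).1
      linarith
    have h1 := m1 hab
    have h2 := m2 hab
    simp only at h1 h2
    rw [abs_le]; constructor <;> linarith

/-- for the perturbed implicit system `g(x(t+1)) = f(x(t), u(t))`
with `|u(t)| ≤ κ`, `|∂f/∂u| ≤ 1` and `|∂f/∂x| ≤ θ|g'|`, `θ ∈ [0,1)`, the set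
`Ω(θ) = {x : ||f(x,ν) − g(x)| − |ν|| ≤ κ(1+θ)/(1−θ) ∀|ν| ≤ κ}` is invariant. -/
theorem stmt_10 (g : ℝ → ℝ) (f : ℝ → ℝ → ℝ) (θ κ : ℝ)
    (hg : ContDiff ℝ 1 g) (hgmono : Monotone g ∨ Antitone g)
    (hf : ContDiff ℝ 1 (fun p : ℝ × ℝ => f p.1 p.2))
    (hκ : 0 < κ) (hθ0 : 0 ≤ θ) (hθ1 : θ < 1)
    (hdu : ∀ x u : ℝ, |u| ≤ κ → |deriv (fun u' => f x u') u| ≤ 1)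
    (hdx : ∀ x u : ℝ, |u| ≤ κ → |deriv (fun x' => f x' u) x| ≤ θ * |deriv g x|)
    (x u : ℕ → ℝ) (hu : ∀ t, |u t| ≤ κ)
    (htraj : ∀ t, g (x (t + 1)) = f (x t) (u t)) :
    ∀ t, x t ∈ {y : ℝ | ∀ ν : ℝ, |ν| ≤ κ →
          |(|f y ν - g y| - |ν|)| ≤ κ * (1 + θ) / (1 - θ)} →
      x (t + 1) ∈ {y : ℝ | ∀ ν : ℝ, |ν| ≤ κ →
          |(|f y ν - g y| - |ν|)| ≤ κ * (1 + θ) / (1 - θ)} := by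
  have h1θ : (0:ℝ) < 1 - θ := by linarith
  set ζ : ℝ := κ * (1 + θ) / (1 - θ) with hζdef
  have hκζ : κ ≤ ζ := by
    rw [hζdef, le_div_iff₀ h1θ]; nlinarith
  have hfd : Differentiable ℝ (fun p : ℝ × ℝ => f p.1 p.2) := hf.differentiable one_ne_zero
  have hgd : Differentiable ℝ g := hg.differentiable one_ne_zero
  -- differentiability of sections
  have hdx' : ∀ v : ℝ, Differentiable ℝ (fun x' => f x' v) := fun v =>
    hfd.comp (differentiable_id.prodMk (differentiable_const v))
  have hdu' : ∀ y : ℝ, Differentiable ℝ (fun u' => f y u') := fun y =>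
    hfd.comp ((differentiable_const y).prodMk differentiable_id)
  -- Lipschitz in x, weighted by g
  have keyx : ∀ v : ℝ, |v| ≤ κ → ∀ a b : ℝ,
      |f b v - f a v| ≤ θ * |g b - g a| := by
    intro v hv a b
    rcases hgmono with hm | ha
    · exact key_lip hgd (hdx' v) hm (fun z => hdx z v hv) a b
    · have hm : Monotone (fun z => -g z) := fun s t hst => neg_le_neg (ha hst)
      have := key_lip (θ := θ) (g := fun z => -g z) hgd.neg (hdx' v) hm (fun z => ?_) a b
      · rw [show -g b - -g a = -(g b - g a) by ring, abs_neg] at this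
        exact this
      · have : deriv (fun z => -g z) z = -deriv g z := deriv.neg
        rw [this, abs_neg]; exact hdx z v hv
  -- Lipschitz in u
  have keyu : ∀ y : ℝ, ∀ ν μ : ℝ, |ν| ≤ κ → |μ| ≤ κ →
      |f y ν - f y μ| ≤ |ν - μ| := by
    intro y ν μ hν hμ
    have hs : Convex ℝ (Icc (-κ) κ) := convex_Icc _ _
    have := Convex.norm_image_sub_le_of_norm_deriv_le (f := fun u' => f y u')
      (s := Icc (-κ) κ) (fun z _ => (hdu' y z))
      (fun z hz => by
        simpa [Real.norm_eq_abs] using hdu y z (abs_le.mpr ⟨hz.1, hz.2⟩))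
      hs (abs_le.mp hμ |> fun h => ⟨h.1, h.2⟩) (abs_le.mp hν |> fun h => ⟨h.1, h.2⟩)
    simpa [Real.norm_eq_abs] using this
  intro t hx ν hν
  set a := x t
  set y := x (t + 1)
  set μ := u t
  have hgy : g y = f a μ := htraj t
  have h1 : |f a μ - g a| ≤ ζ + κ := by
    have := hx μ (hu t)
    have h2 := (abs_le.mp this).2
    have := hu t
    linarith
  have h2 : |f y μ - g y| ≤ θ * (ζ + κ) := by
    rw [hgy]
    calc |f y μ - f a μ| ≤ θ * |g y - g a| := keyx μ (hu t) a y
      _ = θ * |f a μ - g a| := by rw [hgy]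
      _ ≤ θ * (ζ + κ) := by nlinarith [abs_nonneg (f a μ - g a)]
  have h3 : |f y ν - f y μ| ≤ |ν| + κ := by
    calc |f y ν - f y μ| ≤ |ν - μ| := keyu y ν μ hν (hu t)
      _ ≤ |ν| + |μ| := abs_sub _ _
      _ ≤ |ν| + κ := by linarith [hu t]
  have h4 : |f y ν - g y| ≤ |ν| + κ + θ * (ζ + κ) := by
    calc |f y ν - g y| = |(f y ν - f y μ) + (f y μ - g y)| := by ring_nf
      _ ≤ |f y ν - f y μ| + |f y μ - g y| := abs_add_le _ _
      _ ≤ |ν| + κ + θ * (ζ + κ) := by linarith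
  have hζeq : κ + θ * (ζ + κ) = ζ := by
    rw [hζdef]; field_simp; ring
  rw [abs_le]
  constructor
  · have := abs_nonneg (f y ν - g y)
    linarith
  · linarith
end

section
/- In the proof of the perturbed invariance theorem, the key dissipation inequality holds: with V(x) = sup_{|ν|≤κ} | |f(x,ν) − g(x)| − |ν| | − ζ_κ(θ), one has for any τ ≥ 0, V(x(t+1)) − τV(x(t)) ≤ (θ − τ)|Δg_t| + (1+τ)κ + ζ_κ(θ)(τ − 1), where Δg_t = g(x(t+1)) − g(x(t)). -/
open Set

lemma mono_deriv_nonneg_s12 (g : ℝ → ℝ) (hg : Differentiable ℝ g) (hm : Monotone g) (x : ℝ) :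
    0 ≤ deriv g x := by
  have h := hasDerivAt_iff_tendsto_slope.mp (hg x).hasDerivAt
  have ht : Filter.Tendsto (slope g x) (nhdsWithin x (Set.Ioi x)) (nhds (deriv g x)) :=
    h.mono_left (nhdsWithin_mono x (fun y hy => ne_of_gt hy))
  refine ge_of_tendsto ht ?_
  filter_upwards [self_mem_nhdsWithin] with y hy
  rw [slope_def_field]
  exact div_nonneg (sub_nonneg.2 (hm (le_of_lt hy))) (sub_nonneg.2 (le_of_lt hy))

lemma lip_aux (G φ : ℝ → ℝ) (hG : Differentiable ℝ G) (hφ : Differentiable ℝ φ)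
    (h : ∀ s, |deriv φ s| ≤ deriv G s) : ∀ a b : ℝ, |φ b - φ a| ≤ |G b - G a| := by
  have hGm : Monotone G := monotone_of_deriv_nonneg hG fun s => le_trans (abs_nonneg _) (h s)
  have key : ∀ a b : ℝ, a ≤ b → |φ b - φ a| ≤ |G b - G a| := by
    intro a b hab
    have h1 : Monotone (fun s => G s - φ s) := by
      refine monotone_of_deriv_nonneg (hG.sub hφ) fun s => ?_
      rw [deriv_fun_sub (hG s) (hφ s)]
      linarith [h s, le_abs_self (deriv φ s)]
    have h2 : Monotone (fun s => G s + φ s) := by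
      refine monotone_of_deriv_nonneg (hG.add hφ) fun s => ?_
      rw [deriv_fun_add (hG s) (hφ s)]
      linarith [h s, neg_abs_le (deriv φ s)]
    have e1 := h1 hab
    have e2 := h2 hab
    simp only [] at e1 e2
    rw [abs_of_nonneg (sub_nonneg.2 (hGm hab)), abs_le]
    constructor <;> linarith
  intro a b
  rcases le_total a b with hab | hab
  · exact key a b hab
  · rw [abs_sub_comm (φ b), abs_sub_comm (G b)]; exact key b a hab


/-- the key dissipation inequality for the perturbed invariance
theorem: with `V(x) = sup_{|ν|≤κ} ||f(x,ν) − g(x)| − |ν|| − ζ_κ(θ)`, for every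
`τ ≥ 0`, `V(x(t+1)) − τV(x(t)) ≤ (θ−τ)|Δg_t| + (1+τ)κ + ζ_κ(θ)(τ−1)`. -/
theorem stmt_12 (g : ℝ → ℝ) (f : ℝ → ℝ → ℝ) (θ κ : ℝ)
    (hg : ContDiff ℝ 1 g) (hgmono : Monotone g ∨ Antitone g)
    (hf : ContDiff ℝ 1 (fun p : ℝ × ℝ => f p.1 p.2))
    (hκ : 0 < κ) (hθ0 : 0 ≤ θ) (hθ1 : θ < 1)
    (hdu : ∀ x u : ℝ, |u| ≤ κ → |deriv (fun u' => f x u') u| ≤ 1)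
    (hdx : ∀ x u : ℝ, |u| ≤ κ → |deriv (fun x' => f x' u) x| ≤ θ * |deriv g x|)
    (x u : ℕ → ℝ) (hu : ∀ t, |u t| ≤ κ)
    (htraj : ∀ t, g (x (t + 1)) = f (x t) (u t)) :
    ∀ τ : ℝ, 0 ≤ τ → ∀ t,
      ((⨆ ν : Set.Icc (-κ) κ, |(|f (x (t + 1)) ν.1 - g (x (t + 1))| - |ν.1|)|)
          - κ * (1 + θ) / (1 - θ))
        - τ * ((⨆ ν : Set.Icc (-κ) κ, |(|f (x t) ν.1 - g (x t)| - |ν.1|)|)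
          - κ * (1 + θ) / (1 - θ))
      ≤ (θ - τ) * |g (x (t + 1)) - g (x t)| + (1 + τ) * κ
          + κ * (1 + θ) / (1 - θ) * (τ - 1) := by
  have hgd : Differentiable ℝ g := hg.differentiable one_ne_zero
  have hfd : Differentiable ℝ (fun p : ℝ × ℝ => f p.1 p.2) := hf.differentiable one_ne_zero
  have φdiff : ∀ ν : ℝ, Differentiable ℝ (fun s => f s ν) := fun ν =>
    hfd.comp (differentiable_id.prodMk (differentiable_const ν))
  have ψdiff : ∀ y : ℝ, Differentiable ℝ (fun ν => f y ν) := fun y =>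
    hfd.comp ((differentiable_const y).prodMk differentiable_id)
  haveI : Nonempty (Set.Icc (-κ) κ) := ⟨⟨0, Set.mem_Icc.mpr ⟨by linarith, hκ.le⟩⟩⟩
  -- Lipschitz in x w.r.t. g
  have lip_x : ∀ ν : ℝ, |ν| ≤ κ → ∀ a b : ℝ, |f b ν - f a ν| ≤ θ * |g b - g a| := by
    intro ν hν a b
    rcases hgmono with hm | hm
    · have := lip_aux (fun s => θ * g s) (fun s => f s ν) (hgd.const_mul θ) (φdiff ν)
        (fun s => by
          rw [deriv_const_mul θ (hgd s)]
          have h1 := hdx s ν hν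
          rw [abs_of_nonneg (mono_deriv_nonneg_s12 g hgd hm s)] at h1
          exact h1) a b
      calc |f b ν - f a ν| ≤ |θ * g b - θ * g a| := this
        _ = θ * |g b - g a| := by rw [← mul_sub, abs_mul, abs_of_nonneg hθ0]
    · have hmneg : Monotone (fun s => -g s) := fun p q hpq => neg_le_neg (hm hpq)
      have := lip_aux (fun s => θ * (-g s)) (fun s => f s ν) ((hgd.neg).const_mul θ) (φdiff ν)
        (fun s => by
          rw [deriv_const_mul θ (d := fun s => -g s) (hgd.neg s), deriv.fun_neg]
          have h1 := hdx s ν hν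
          have h2 : |deriv g s| = -(deriv g s) := by
            rw [abs_of_nonpos]
            have := mono_deriv_nonneg_s12 (fun s => -g s) hgd.neg hmneg s
            rw [deriv.fun_neg] at this; linarith
          rw [h2] at h1
          exact h1) a b
      calc |f b ν - f a ν| ≤ |θ * (-g b) - θ * (-g a)| := this
        _ = θ * |g b - g a| := by
            rw [← mul_sub, abs_mul, abs_of_nonneg hθ0, neg_sub_neg, abs_sub_comm]
  -- Lipschitz in u
  have lip_u : ∀ y a b : ℝ, a ∈ Set.Icc (-κ) κ → b ∈ Set.Icc (-κ) κ →
      |f y b - f y a| ≤ |b - a| := by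
    intro y a b ha hb
    have := Convex.norm_image_sub_le_of_norm_deriv_le
      (fun ν _ => (ψdiff y) ν)
      (fun ν hν => by
        rw [Real.norm_eq_abs]
        exact hdu y ν (abs_le.2 ⟨hν.1, hν.2⟩))
      (convex_Icc (-κ) κ) ha hb
    simpa [Real.norm_eq_abs] using this
  -- bddAbove
  have hb : ∀ y : ℝ, BddAbove (Set.range fun ν : Set.Icc (-κ) κ =>
      |(|f y ν.1 - g y| - |ν.1|)|) := by
    intro y
    have cont : Continuous fun ν : ℝ => |(|f y ν - g y| - |ν|)| :=
      (((hf.continuous.comp (Continuous.prodMk_right y)).sub continuous_const).abs.sub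
        continuous_abs).abs
    have himg : BddAbove ((fun ν : ℝ => |(|f y ν - g y| - |ν|)|) '' Set.Icc (-κ) κ) :=
      ((isCompact_Icc (a := -κ) (b := κ)).image cont).bddAbove
    refine BddAbove.mono ?_ himg
    rintro _ ⟨ν, rfl⟩
    exact ⟨ν.1, ν.2, rfl⟩
  intro τ hτ t
  set Δ := |g (x (t + 1)) - g (x t)| with hΔ
  have hut : u t ∈ Set.Icc (-κ) κ := by
    have := abs_le.mp (hu t); exact Set.mem_Icc.mpr ⟨this.1, this.2⟩
  -- upper bound on S1
  have h_up : (⨆ ν : Set.Icc (-κ) κ, |(|f (x (t + 1)) ν.1 - g (x (t + 1))| - |ν.1|)|)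
      ≤ θ * Δ + κ := by
    refine ciSup_le fun ν => ?_
    have hν : |ν.1| ≤ κ := abs_le.2 ⟨ν.2.1, ν.2.2⟩
    have hA : |f (x (t + 1)) ν.1 - g (x (t + 1))| ≤ θ * Δ + |ν.1 - u t| := by
      have e : f (x (t + 1)) ν.1 - g (x (t + 1)) =
          (f (x (t + 1)) ν.1 - f (x t) ν.1) + (f (x t) ν.1 - f (x t) (u t)) := by
        rw [htraj t]; ring
      rw [e]
      calc |(f (x (t + 1)) ν.1 - f (x t) ν.1) + (f (x t) ν.1 - f (x t) (u t))|
          ≤ |f (x (t + 1)) ν.1 - f (x t) ν.1| + |f (x t) ν.1 - f (x t) (u t)| := abs_add_le _ _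
        _ ≤ θ * Δ + |ν.1 - u t| :=
            add_le_add (lip_x ν.1 hν (x t) (x (t + 1))) (lip_u (x t) (u t) ν.1 hut ν.2)
    have hsub : |ν.1 - u t| ≤ |ν.1| + |u t| := abs_sub _ _
    have hΔ0 : 0 ≤ θ * Δ := mul_nonneg hθ0 (abs_nonneg _)
    rw [abs_le]
    constructor
    · have := abs_nonneg (f (x (t + 1)) ν.1 - g (x (t + 1)))
      linarith
    · linarith [hu t]
  -- lower bound on S0
  have h_lo : Δ - κ ≤ ⨆ ν : Set.Icc (-κ) κ, |(|f (x t) ν.1 - g (x t)| - |ν.1|)| := by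
    have hle := le_ciSup (hb (x t)) (⟨u t, hut⟩ : Set.Icc (-κ) κ)
    have e : f (x t) (u t) - g (x t) = g (x (t + 1)) - g (x t) := by rw [htraj t]
    rw [e] at hle  -- may need simp
    have : Δ - κ ≤ |(Δ - |u t|)| := by
      have h1 := le_abs_self (Δ - |u t|)
      linarith [hu t]
    calc Δ - κ ≤ |(Δ - |u t|)| := this
      _ ≤ _ := hle
  have hprod : τ * (Δ - κ) ≤ τ * (⨆ ν : Set.Icc (-κ) κ,
      |(|f (x t) ν.1 - g (x t)| - |ν.1|)|) := mul_le_mul_of_nonneg_left h_lo hτ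
  nlinarith [h_up, hprod]
end

section
/- Consider the multiplicatively perturbed market dynamics (c')⁻¹(λ(t+1)) = (1 + δ(t)/2)·(v')⁻¹(λ(t)) with |δ(t)| ≤ κ ≤ 1. Setting g(λ) = log((c')⁻¹(λ)) and f(λ, δ) = log(1 + δ/2) + log((v')⁻¹(λ)), the disturbance bound |∂f/∂δ| ≤ 1 holds, and |∂f/∂λ| ≤ θ*|g'(λ)| holds where θ* = sup_λ |ε_D(λ)/ε_S(λ)| is the maximal relative price-elasticity; hence if θ* < 1 the log-scaled IMV of supply is at most 2κ/(1 − θ*). -/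
open Filter Finset Real

/-- for the multiplicatively perturbed market dynamics
`s(λ(t+1)) = (1 + δ(t)/2)·d(λ(t))` with `|δ(t)| ≤ κ ≤ 1`, where `d = (v')⁻¹`,
`s = (c')⁻¹`, `g(λ) = log(s λ)` and `f(λ,δ) = log(1+δ/2) + log(d λ)`:
the disturbance bound `|∂f/∂δ| ≤ 1` holds, the state bound
`|∂f/∂λ| ≤ θ*|g'(λ)|` holds with `θ*` the maximal relative price-elasticity,
and if `θ* < 1` the log-scaled IMV of supply is at most `2κ/(1−θ*)`. -/
theorem stmt_13 (c v d s : ℝ → ℝ) (κ θstar : ℝ)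
    (hc : ContDiffOn ℝ 2 c (Set.Ioi (0:ℝ))) (hv : ContDiffOn ℝ 2 v (Set.Ioi (0:ℝ)))
    (hcconv : StrictConvexOn ℝ (Set.Ioi 0) c) (hvconc : StrictConcaveOn ℝ (Set.Ioi 0) v)
    (hcmono : StrictMonoOn c (Set.Ioi 0)) (hvmono : StrictMonoOn v (Set.Ioi 0))
    (hdpos : ∀ l > (0:ℝ), 0 < d l) (hspos : ∀ l > (0:ℝ), 0 < s l)
    (hdinv : ∀ l > (0:ℝ), deriv v (d l) = l) (hsinv : ∀ l > (0:ℝ), deriv c (s l) = l)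
    (hddiff : ∀ l > (0:ℝ), DifferentiableAt ℝ d l) (hsdiff : ∀ l > (0:ℝ), DifferentiableAt ℝ s l)
    (hκ0 : 0 < κ) (hκ1 : κ ≤ 1) (hθ0 : 0 ≤ θstar)
    (hθelast : ∀ l > (0:ℝ),
      |((l / d l) * deriv d l) / ((l / s l) * deriv s l)| ≤ θstar) :
    (∀ δ : ℝ, |δ| ≤ κ → |deriv (fun δ' : ℝ => Real.log (1 + δ' / 2)) δ| ≤ 1) ∧
    (∀ l > (0:ℝ),
      |deriv (fun l' => Real.log (d l')) l| ≤ θstar * |deriv (fun l' => Real.log (s l')) l|) ∧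
    (θstar < 1 →
      ∀ lam δ : ℕ → ℝ, (∀ t, 0 < lam t) → (∀ t, |δ t| ≤ κ) →
        (∀ t, s (lam (t + 1)) = (1 + δ t / 2) * d (lam t)) →
        Filter.limsup
            (fun T : ℕ =>
              (1 / (T : ℝ)) * ∑ t ∈ Finset.Icc 1 T,
                |Real.log (s (lam (t + 1))) - Real.log (s (lam t))|)
            atTop
          ≤ 2 * κ / (1 - θstar)) := by
  -- basic positivity of 1 + x/2
  have hpos2 : ∀ x : ℝ, |x| ≤ 1 → (1:ℝ)/2 ≤ 1 + x / 2 := by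
    intro x hx
    have := abs_le.mp hx
    linarith [this.1]
  -- derivative of log(1+x/2)
  have hder1 : ∀ x : ℝ, (0:ℝ) < 1 + x / 2 →
      HasDerivAt (fun δ' : ℝ => Real.log (1 + δ' / 2)) ((1/2) / (1 + x/2)) x := by
    intro x hx
    have h1 : HasDerivAt (fun δ' : ℝ => 1 + δ' / 2) (1/2) x := by
      simpa using ((hasDerivAt_id x).div_const 2).const_add 1
    exact h1.log hx.ne'
  have part1 : ∀ δ : ℝ, |δ| ≤ κ → |deriv (fun δ' : ℝ => Real.log (1 + δ' / 2)) δ| ≤ 1 := by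
    intro δ hδ
    have hδ1 : |δ| ≤ 1 := hδ.trans hκ1
    have h2 : (1:ℝ)/2 ≤ 1 + δ/2 := hpos2 δ hδ1
    have h0 : (0:ℝ) < 1 + δ/2 := by linarith
    rw [(hder1 δ h0).deriv, abs_div, abs_of_pos h0,
      abs_of_pos (by norm_num : (0:ℝ) < 1/2), div_le_one h0]
    linarith
  -- derivative of c is differentiable on Ioi 0
  have hc2 : DifferentiableOn ℝ (deriv c) (Set.Ioi (0:ℝ)) :=
    (hc.deriv_of_isOpen (m := 1) isOpen_Ioi (by norm_num)).differentiableOn one_ne_zero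
  -- deriv c is strictly monotone on Ioi 0
  have hcd : ∀ x ∈ Set.Ioi (0:ℝ), DifferentiableAt ℝ c x := fun x hx =>
    (hc.differentiableOn (by norm_num)).differentiableAt (isOpen_Ioi.mem_nhds hx)
  have hcderiv_mono : StrictMonoOn (deriv c) (Set.Ioi 0) := hcconv.strictMonoOn_deriv hcd
  -- s is strictly monotone on Ioi 0
  have hsmono : StrictMonoOn s (Set.Ioi 0) := by
    intro l1 h1 l2 h2 h12
    simp only [Set.mem_Ioi] at h1 h2
    by_contra hle
    push_neg at hle
    rcases lt_or_eq_of_le hle with h | h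
    · have := hcderiv_mono (Set.mem_Ioi.mpr (hspos l2 h2)) (Set.mem_Ioi.mpr (hspos l1 h1)) h
      rw [hsinv l1 h1, hsinv l2 h2] at this; linarith
    · have : l2 = l1 := by rw [← hsinv l2 h2, ← hsinv l1 h1, h]
      linarith
  -- deriv s is nonnegative
  have hsderiv_nonneg : ∀ l > (0:ℝ), 0 ≤ deriv s l := by
    intro l hl
    have ht := hasDerivAt_iff_tendsto_slope.mp (hsdiff l hl).hasDerivAt
    have hsub : Set.Ioi l ⊆ {l}ᶜ := fun y hy => by
      simp only [Set.mem_compl_iff, Set.mem_singleton_iff]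
      exact ne_of_gt hy
    have ht' : Filter.Tendsto (slope s l) (nhdsWithin l (Set.Ioi l)) (nhds (deriv s l)) :=
      ht.mono_left (nhdsWithin_mono l hsub)
    refine ge_of_tendsto ht' ?_
    filter_upwards [self_mem_nhdsWithin] with y hy
    have hy' : l < y := hy
    have hsy : s l < s y :=
      hsmono (Set.mem_Ioi.mpr hl) (Set.mem_Ioi.mpr (hl.trans hy')) hy'
    rw [slope_def_field]
    exact div_nonneg (by linarith) (by linarith)
  -- chain rule: deriv (deriv c) (s l) * deriv s l = 1
  have hchain : ∀ l > (0:ℝ), deriv (deriv c) (s l) * deriv s l = 1 := by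
    intro l hl
    have hca : DifferentiableAt ℝ (deriv c) (s l) :=
      hc2.differentiableAt (isOpen_Ioi.mem_nhds (Set.mem_Ioi.mpr (hspos l hl)))
    have hcs : HasDerivAt (fun x => deriv c (s x)) (deriv (deriv c) (s l) * deriv s l) l :=
      HasDerivAt.comp l hca.hasDerivAt (hsdiff l hl).hasDerivAt
    have hev : (fun x => deriv c (s x)) =ᶠ[nhds l] (id : ℝ → ℝ) := by
      filter_upwards [isOpen_Ioi.mem_nhds (Set.mem_Ioi.mpr hl)] with x hx
      exact hsinv x hx
    have heq : deriv (fun x => deriv c (s x)) l = deriv (id : ℝ → ℝ) l := hev.deriv_eq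
    rw [hcs.deriv, deriv_id] at heq
    exact heq
  have hsderiv_pos : ∀ l > (0:ℝ), 0 < deriv s l := by
    intro l hl
    rcases lt_or_eq_of_le (hsderiv_nonneg l hl) with h | h
    · exact h
    · exfalso
      have := hchain l hl
      rw [← h, mul_zero] at this
      norm_num at this
  -- derivatives of log compositions
  have hlogd : ∀ l > (0:ℝ), HasDerivAt (fun l' => Real.log (d l')) (deriv d l / d l) l :=
    fun l hl => ((hddiff l hl).hasDerivAt).log (hdpos l hl).ne'
  have hlogs : ∀ l > (0:ℝ), HasDerivAt (fun l' => Real.log (s l')) (deriv s l / s l) l :=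
    fun l hl => ((hsdiff l hl).hasDerivAt).log (hspos l hl).ne'
  -- state bound
  have part2' : ∀ l > (0:ℝ), |deriv d l / d l| ≤ θstar * (deriv s l / s l) := by
    intro l hl
    have h1 := hθelast l hl
    have hs' := hsderiv_pos l hl
    have hd := hdpos l hl
    have hs := hspos l hl
    have key : ((l / d l) * deriv d l) / ((l / s l) * deriv s l)
        = (deriv d l / d l) / (deriv s l / s l) := by
      field_simp
    rw [key, abs_div] at h1
    have hy : 0 < |deriv s l / s l| := abs_pos.mpr (div_pos hs' hs).ne'
    have := (div_le_iff₀ hy).mp h1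
    calc |deriv d l / d l| ≤ θstar * |deriv s l / s l| := this
      _ = θstar * (deriv s l / s l) := by rw [abs_of_pos (div_pos hs' hs)]
  have part2 : ∀ l > (0:ℝ),
      |deriv (fun l' => Real.log (d l')) l| ≤ θstar * |deriv (fun l' => Real.log (s l')) l| := by
    intro l hl
    rw [(hlogd l hl).deriv, (hlogs l hl).deriv,
      abs_of_pos (div_pos (hsderiv_pos l hl) (hspos l hl))]
    exact part2' l hl
  refine ⟨part1, part2, ?_⟩
  intro hθ1 lam δ hlam hδκ hdyn
  have h1θ : (0:ℝ) < 1 - θstar := by linarith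
  -- contraction lemma via monotonicity
  have diffF : ∀ x ∈ Set.Ioi (0:ℝ), DifferentiableAt ℝ (fun l' => Real.log (d l')) x :=
    fun x hx => (hlogd x hx).differentiableAt
  have diffG : ∀ x ∈ Set.Ioi (0:ℝ), DifferentiableAt ℝ (fun l' => Real.log (s l')) x :=
    fun x hx => (hlogs x hx).differentiableAt
  have key3 : ∀ a ∈ Set.Ioi (0:ℝ), ∀ b ∈ Set.Ioi (0:ℝ), a ≤ b →
      |Real.log (d b) - Real.log (d a)|
        ≤ θstar * (Real.log (s b) - Real.log (s a)) := by
    intro a ha b hb hab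
    have hmono : ∀ (e : ℝ), e = 1 ∨ e = -1 → MonotoneOn
        (fun x => θstar * Real.log (s x) + e * Real.log (d x)) (Set.Ioi (0:ℝ)) := by
      intro e he
      refine monotoneOn_of_deriv_nonneg (convex_Ioi 0) ?_ ?_ ?_
      · intro x hx
        exact (((hlogs x hx).const_mul θstar).add ((hlogd x hx).const_mul e)
          ).differentiableAt.continuousAt.continuousWithinAt
      · rw [interior_Ioi]
        intro x hx
        exact (((hlogs x hx).const_mul θstar).add ((hlogd x hx).const_mul e)
          ).differentiableAt.differentiableWithinAt
      · rw [interior_Ioi]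
        intro x hx
        have hdx : HasDerivAt (fun x => θstar * Real.log (s x) + e * Real.log (d x))
            (θstar * (deriv s x / s x) + e * (deriv d x / d x)) x :=
          ((hlogs x hx).const_mul θstar).add ((hlogd x hx).const_mul e)
        rw [hdx.deriv]
        have hF := part2' x hx
        have habs := abs_le.mp hF
        rcases he with he | he <;> rw [he] <;> nlinarith [habs.1, habs.2]
    have h1 := hmono 1 (Or.inl rfl) ha hb hab
    have h2 := hmono (-1) (Or.inr rfl) ha hb hab
    simp only [one_mul, neg_one_mul] at h1 h2
    rw [abs_le]
    constructor <;> linarith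
  have key3' : ∀ a > (0:ℝ), ∀ b > (0:ℝ),
      |Real.log (d b) - Real.log (d a)| ≤ θstar * |Real.log (s b) - Real.log (s a)| := by
    intro a ha b hb
    rcases le_total a b with hab | hab
    · have h := key3 a (Set.mem_Ioi.mpr ha) b (Set.mem_Ioi.mpr hb) hab
      have hsab : s a ≤ s b := by
        rcases lt_or_eq_of_le hab with h' | h'
        · exact le_of_lt (hsmono (Set.mem_Ioi.mpr ha) (Set.mem_Ioi.mpr hb) h')
        · rw [h']
      have hnn : Real.log (s a) ≤ Real.log (s b) := Real.log_le_log (hspos a ha) hsab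
      rwa [abs_of_nonneg (sub_nonneg.mpr hnn)]
    · have h := key3 b (Set.mem_Ioi.mpr hb) a (Set.mem_Ioi.mpr ha) hab
      have hsab : s b ≤ s a := by
        rcases lt_or_eq_of_le hab with h' | h'
        · exact le_of_lt (hsmono (Set.mem_Ioi.mpr hb) (Set.mem_Ioi.mpr ha) h')
        · rw [h']
      have hnn : Real.log (s b) ≤ Real.log (s a) := Real.log_le_log (hspos b hb) hsab
      rw [abs_sub_comm (Real.log (d b)) (Real.log (d a)),
        abs_sub_comm (Real.log (s b)) (Real.log (s a))]
      rwa [abs_of_nonneg (sub_nonneg.mpr hnn)]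
  -- bound on |log(1 + x/2)|
  have hlog1 : ∀ x : ℝ, |x| ≤ κ → |Real.log (1 + x / 2)| ≤ κ := by
    intro x hx
    have hx1 : |x| ≤ 1 := hx.trans hκ1
    have h2 : (1:ℝ)/2 ≤ 1 + x/2 := hpos2 x hx1
    have h0 : (0:ℝ) < 1 + x/2 := by linarith
    have hxx := abs_le.mp hx
    rw [abs_le]
    constructor
    · rw [Real.le_log_iff_exp_le h0]
      have hexp : 1 + κ ≤ Real.exp κ := by linarith [Real.add_one_le_exp κ]
      have h3 : Real.exp (-κ) ≤ 1/(1+κ) := by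
        rw [Real.exp_neg, inv_eq_one_div]
        exact one_div_le_one_div_of_le (by linarith) hexp
      have h4 : 1/(1+κ) ≤ 1 + x/2 := by
        rw [div_le_iff₀ (by linarith : (0:ℝ) < 1+κ)]
        nlinarith [hxx.1]
      linarith
    · have := Real.log_le_sub_one_of_pos h0
      linarith [hxx.2]
  -- dynamics in log coordinates
  have hlogdyn : ∀ t, Real.log (s (lam (t+1)))
      = Real.log (1 + δ t / 2) + Real.log (d (lam t)) := by
    intro t
    have h0 : (0:ℝ) < 1 + δ t/2 := by
      have := hpos2 (δ t) ((hδκ t).trans hκ1); linarith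
    rw [hdyn t, Real.log_mul h0.ne' (hdpos _ (hlam t)).ne']
  set a : ℕ → ℝ := fun t => |Real.log (s (lam (t+1))) - Real.log (s (lam t))| with ha
  have hanonneg : ∀ t, 0 ≤ a t := fun t => abs_nonneg _
  -- recursion
  have hrec : ∀ t, a (t+1) ≤ 2*κ + θstar * a t := by
    intro t
    have hb1 := hlog1 (δ (t+1)) (hδκ (t+1))
    have hb2 := hlog1 (δ t) (hδκ t)
    have hsplit : Real.log (s (lam (t+1+1))) - Real.log (s (lam (t+1)))
        = (Real.log (1 + δ (t+1)/2) - Real.log (1 + δ t/2))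
          + (Real.log (d (lam (t+1))) - Real.log (d (lam t))) := by
      rw [hlogdyn (t+1), hlogdyn t]; ring
    have h6 : |Real.log (d (lam (t+1))) - Real.log (d (lam t))|
        ≤ θstar * |Real.log (s (lam (t+1))) - Real.log (s (lam t))| :=
      key3' (lam t) (hlam t) (lam (t+1)) (hlam (t+1))
    have h5 : |Real.log (1 + δ (t+1)/2) - Real.log (1 + δ t/2)| ≤ 2*κ := by
      have h1' := abs_le.mp hb1
      have h2' := abs_le.mp hb2
      rw [abs_le]; constructor <;> linarith
    calc a (t+1) = |(Real.log (1 + δ (t+1)/2) - Real.log (1 + δ t/2))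
          + (Real.log (d (lam (t+1))) - Real.log (d (lam t)))| := by
            rw [ha]; simp only []; rw [hsplit]
      _ ≤ |Real.log (1 + δ (t+1)/2) - Real.log (1 + δ t/2)|
          + |Real.log (d (lam (t+1))) - Real.log (d (lam t))| := abs_add_le _ _
      _ ≤ 2*κ + θstar * a t := by
            have : |Real.log (s (lam (t+1))) - Real.log (s (lam t))| = a t := rfl
            rw [this] at h6
            linarith
  -- geometric bound
  have hB : ∀ t, a t ≤ 2*κ/(1-θstar) + θstar^t * a 0 := by
    intro t
    induction t with
    | zero =>
      have : 0 ≤ 2*κ/(1-θstar) := by positivity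
      simp only [pow_zero, one_mul]
      linarith
    | succ n ih =>
      have h := hrec n
      have h2 : θstar * a n ≤ θstar * (2*κ/(1-θstar) + θstar^n * a 0) :=
        mul_le_mul_of_nonneg_left ih hθ0
      have hBfix : 2*κ + θstar * (2*κ/(1-θstar)) = 2*κ/(1-θstar) := by
        field_simp
        ring
      calc a (n+1) ≤ 2*κ + θstar * a n := h
        _ ≤ 2*κ + θstar * (2*κ/(1-θstar) + θstar^n * a 0) := by linarith
        _ = (2*κ + θstar * (2*κ/(1-θstar))) + θstar^(n+1) * a 0 := by ring
        _ = 2*κ/(1-θstar) + θstar^(n+1) * a 0 := by rw [hBfix]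
  -- sum bound
  have hsum : ∀ T : ℕ, ∑ t ∈ Finset.Icc 1 T, a t
      ≤ (T : ℝ) * (2*κ/(1-θstar)) + a 0 * (1-θstar)⁻¹ := by
    intro T
    have h1 : ∑ t ∈ Finset.Icc 1 T, a t
        ≤ ∑ t ∈ Finset.Icc 1 T, (2*κ/(1-θstar) + θstar^t * a 0) :=
      Finset.sum_le_sum fun t _ => hB t
    have h2 : ∑ t ∈ Finset.Icc 1 T, (2*κ/(1-θstar) + θstar^t * a 0)
        = ((Finset.Icc 1 T).card : ℝ) * (2*κ/(1-θstar))
          + (∑ t ∈ Finset.Icc 1 T, θstar^t) * a 0 := by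
      rw [Finset.sum_add_distrib, Finset.sum_const, nsmul_eq_mul, ← Finset.sum_mul]
    have hcard : ((Finset.Icc 1 T).card : ℝ) ≤ (T : ℝ) := by
      rw [Nat.card_Icc]
      simp
    have hgeo : ∑ t ∈ Finset.Icc 1 T, θstar^t ≤ (1-θstar)⁻¹ :=
      sum_le_hasSum _ (fun i _ => pow_nonneg hθ0 i)
        (hasSum_geometric_of_lt_one hθ0 hθ1)
    have ha0 := hanonneg 0
    have hBnn : (0:ℝ) ≤ 2*κ/(1-θstar) := by positivity
    calc ∑ t ∈ Finset.Icc 1 T, a t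
        ≤ ((Finset.Icc 1 T).card : ℝ) * (2*κ/(1-θstar))
          + (∑ t ∈ Finset.Icc 1 T, θstar^t) * a 0 := by rw [← h2]; exact h1
      _ ≤ (T : ℝ) * (2*κ/(1-θstar)) + a 0 * (1-θstar)⁻¹ := by
          have := mul_le_mul_of_nonneg_right hcard hBnn
          have := mul_le_mul_of_nonneg_right hgeo ha0
          nlinarith
  -- limsup
  set B := 2*κ/(1-θstar) with hBdef
  set C := a 0 * (1-θstar)⁻¹ with hCdef
  have hfg : ∀ᶠ T : ℕ in atTop,
      (1 / (T : ℝ)) * ∑ t ∈ Finset.Icc 1 T,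
        |Real.log (s (lam (t + 1))) - Real.log (s (lam t))| ≤ B + C / T := by
    filter_upwards [eventually_ge_atTop 1] with T hT
    have hT0 : (0:ℝ) < (T : ℝ) := by exact_mod_cast hT
    have h1 := hsum T
    have h2 : (1 / (T : ℝ)) * ∑ t ∈ Finset.Icc 1 T, a t
        ≤ (1 / (T : ℝ)) * ((T : ℝ) * B + C) :=
      mul_le_mul_of_nonneg_left h1 (by positivity)
    have h3 : (1 / (T : ℝ)) * ((T : ℝ) * B + C) = B + C / T := by
      field_simp
    calc (1 / (T : ℝ)) * ∑ t ∈ Finset.Icc 1 T,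
          |Real.log (s (lam (t + 1))) - Real.log (s (lam t))|
        = (1 / (T : ℝ)) * ∑ t ∈ Finset.Icc 1 T, a t := rfl
      _ ≤ (1 / (T : ℝ)) * ((T : ℝ) * B + C) := h2
      _ = B + C / T := h3
  have hg : Filter.Tendsto (fun T : ℕ => B + C / (T : ℝ)) atTop (nhds (B + 0)) :=
    tendsto_const_nhds.add (tendsto_const_div_atTop_nhds_zero_nat C)
  have hg' : Filter.Tendsto (fun T : ℕ => B + C / (T : ℝ)) atTop (nhds B) := by
    simpa using hg
  have hcob : Filter.IsCoboundedUnder (· ≤ ·) atTop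
      (fun T : ℕ => (1 / (T : ℝ)) * ∑ t ∈ Finset.Icc 1 T,
        |Real.log (s (lam (t + 1))) - Real.log (s (lam t))|) := by
    apply Filter.isCoboundedUnder_le_of_le atTop (x := 0)
    intro T
    positivity
  have hbdd : Filter.IsBoundedUnder (· ≤ ·) atTop (fun T : ℕ => B + C / (T : ℝ)) :=
    hg'.isBoundedUnder_le
  calc Filter.limsup
        (fun T : ℕ => (1 / (T : ℝ)) * ∑ t ∈ Finset.Icc 1 T,
          |Real.log (s (lam (t + 1))) - Real.log (s (lam t))|) atTop
      ≤ Filter.limsup (fun T : ℕ => B + C / (T : ℝ)) atTop :=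
        Filter.limsup_le_limsup hfg hcob hbdd
    _ = B := hg'.limsup_eq
end

section
/- For the price dynamics λ(t+1) = c'((v')⁻¹(λ(t))) with representative agents, if there exists l ≥ 0 such that the maximal relative generalized price-elasticity θ*(l) = sup_λ |((λ/d(λ))^l d'(λ)) / ((λ/s(λ))^l s'(λ))| < 1, where d = (v')⁻¹ and s = (c')⁻¹, then the price dynamics are stable (trajectories converge to the market-clearing equilibrium price). -/
open Filter Topology Real

lemma aux_deriv_nonneg {f : ℝ → ℝ} {x : ℝ} (hx : x ∈ Set.Ioi (0:ℝ))
    (hmono : StrictMonoOn f (Set.Ioi 0)) (hdiff : DifferentiableAt ℝ f x) :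
    0 ≤ deriv f x := by
  have h := hdiff.hasDerivAt
  rw [hasDerivAt_iff_tendsto_slope] at h
  have h2 : Tendsto (slope f x) (𝓝[>] x) (𝓝 (deriv f x)) :=
    h.mono_left (nhdsWithin_mono x (fun y hy => hy.ne'))
  refine ge_of_tendsto h2 ?_
  filter_upwards [self_mem_nhdsWithin] with y hy
  have hy' : x < y := hy
  have hfy : f x < f y := hmono hx (lt_trans hx hy') hy'
  rw [slope_def_field]
  exact le_of_lt (div_pos (sub_pos.mpr hfy) (sub_pos.mpr hy'))

lemma aux_rho_deriv (l : ℝ) : ∀ z : ℝ, 0 < z →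
    HasDerivAt (if l = 1 then Real.log else fun z : ℝ => z ^ (1 - l) / (1 - l)) (z ^ (-l)) z := by
  intro z hz
  by_cases h1 : l = 1
  · simp only [h1, if_pos rfl, ite_true]
    have := Real.hasDerivAt_log hz.ne'
    convert this using 1
    exact Real.rpow_neg_one z
  · simp only [if_neg h1]
    have h2 : HasDerivAt (fun z : ℝ => z ^ (1 - l)) ((1 - l) * z ^ (1 - l - 1)) z :=
      Real.hasDerivAt_rpow_const (Or.inl hz.ne')
    have h3 := h2.div_const (1 - l)
    have hne : (1 : ℝ) - l ≠ 0 := sub_ne_zero.mpr (Ne.symm h1)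
    refine HasDerivAt.congr_deriv h3 (Eq.symm ?_)
    rw [mul_div_assoc]
    rw [show (1 - l) * (z ^ (1 - l - 1) / (1 - l)) = z ^ (1 - l - 1) by field_simp]
    congr 1
    ring

/-- for the price dynamics `λ(t+1) = c'(d(λ(t)))` with `d = (v')⁻¹`,
`s = (c')⁻¹`, if for some `l ≥ 0` the maximal relative generalized
price-elasticity `θ*(l) = sup_λ |((λ/d λ)^l d'(λ)) / ((λ/s λ)^l s'(λ))| < 1`,
then the price dynamics are stable: every trajectory converges to the
market-clearing equilibrium price. -/
theorem stmt_14 (c v d s : ℝ → ℝ) (l θ : ℝ)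
    (hc : ContDiffOn ℝ 2 c (Set.Ioi (0:ℝ))) (hv : ContDiffOn ℝ 2 v (Set.Ioi (0:ℝ)))
    (hcconv : StrictConvexOn ℝ (Set.Ioi 0) c) (hvconc : StrictConcaveOn ℝ (Set.Ioi 0) v)
    (hcmono : StrictMonoOn c (Set.Ioi 0)) (hvmono : StrictMonoOn v (Set.Ioi 0))
    (hdpos : ∀ x > (0:ℝ), 0 < d x) (hspos : ∀ x > (0:ℝ), 0 < s x)
    (hdinv : ∀ x > (0:ℝ), deriv v (d x) = x) (hsinv : ∀ x > (0:ℝ), deriv c (s x) = x)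
    (hddiff : ∀ x > (0:ℝ), DifferentiableAt ℝ d x) (hsdiff : ∀ x > (0:ℝ), DifferentiableAt ℝ s x)
    (hl : 0 ≤ l) (hθ : θ < 1)
    (helast : ∀ lam > (0:ℝ),
      |((lam / d lam) ^ l * deriv d lam) / ((lam / s lam) ^ l * deriv s lam)| ≤ θ) :
    ∀ lam : ℕ → ℝ, (∀ t, 0 < lam t) →
      (∀ t, lam (t + 1) = deriv c (d (lam t))) →
      ∃ lamstar : ℝ, 0 < lamstar ∧ d lamstar = s lamstar ∧
        Tendsto lam atTop (𝓝 lamstar) := by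
  intro lam hpos hdyn
  set P : Set ℝ := Set.Ioi (0:ℝ) with hP
  have hopen : IsOpen P := isOpen_Ioi
  have hconv : Convex ℝ P := convex_Ioi 0
  -- differentiability of c, v on P
  have hcdiff : ∀ x ∈ P, DifferentiableAt ℝ c x := fun x hx =>
    (hc.contDiffAt (hopen.mem_nhds hx)).differentiableAt (by norm_num)
  have hvdiff : ∀ x ∈ P, DifferentiableAt ℝ v x := fun x hx =>
    (hv.contDiffAt (hopen.mem_nhds hx)).differentiableAt (by norm_num)
  -- deriv c strictly monotone, deriv v strictly antitone
  have Cmono : StrictMonoOn (deriv c) P := hcconv.strictMonoOn_deriv hcdiff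
  have Danti : StrictAntiOn (deriv v) P := hvconc.strictAntiOn_deriv hvdiff
  -- s strictly monotone on P, d strictly antitone on P
  have smono : StrictMonoOn s P := by
    intro x hx y hy hxy
    by_contra h
    push_neg at h
    have h2 : deriv c (s y) ≤ deriv c (s x) := by
      rcases eq_or_lt_of_le h with h3 | h3
      · rw [h3]
      · exact le_of_lt (Cmono (hspos y hy) (hspos x hx) h3)
    rw [hsinv x hx, hsinv y hy] at h2
    exact absurd h2 (not_le.mpr hxy)
  have danti : StrictAntiOn d P := by
    intro x hx y hy hxy
    by_contra h
    push_neg at h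
    have h2 : deriv v (d y) ≤ deriv v (d x) := by
      rcases eq_or_lt_of_le h with h3 | h3
      · rw [h3]
      · exact le_of_lt (Danti (hdpos x hx) (hdpos y hy) h3)
    rw [hdinv x hx, hdinv y hy] at h2
    exact absurd h2 (not_le.mpr hxy)
  -- deriv s > 0 on P
  have hCd : ContDiffOn ℝ 1 (deriv c) P := hc.deriv_of_isOpen hopen (by norm_num)
  have sderiv_pos : ∀ x ∈ P, 0 < deriv s x := by
    intro x hx
    have hnn : 0 ≤ deriv s x := aux_deriv_nonneg hx smono (hsdiff x hx)
    rcases eq_or_lt_of_le hnn with h0 | h0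
    · exfalso
      have hsx : s x ∈ P := hspos x hx
      have hCdiff : DifferentiableAt ℝ (deriv c) (s x) :=
        (hCd.contDiffAt (hopen.mem_nhds hsx)).differentiableAt one_ne_zero
      have hcomp : deriv (deriv c ∘ s) x = deriv (deriv c) (s x) * deriv s x :=
        deriv_comp x hCdiff (hsdiff x hx)
      have heq : (deriv c ∘ s) =ᶠ[𝓝 x] id := by
        filter_upwards [hopen.mem_nhds hx] with y hy
        exact hsinv y hy
      have h1 : deriv (deriv c ∘ s) x = 1 := by
        rw [heq.deriv_eq, deriv_id]
      rw [hcomp, ← h0, mul_zero] at h1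
      norm_num at h1
    · exact h0
  -- θ is nonneg
  have θnonneg : 0 ≤ θ := le_trans (abs_nonneg _) (helast 1 one_pos)
  -- key derivative bound
  have hbound : ∀ x ∈ P, |(d x) ^ (-l) * deriv d x| ≤ θ * ((s x) ^ (-l) * deriv s x) := by
    intro x hx
    have hx0 : (0:ℝ) < x := hx
    have hdx := hdpos x hx
    have hsx := hspos x hx
    have hxl : (0:ℝ) < x ^ l := Real.rpow_pos_of_pos hx0 l
    have hA : (x / d x) ^ l * deriv d x = x ^ l * ((d x) ^ (-l) * deriv d x) := by
      rw [Real.div_rpow hx0.le hdx.le, Real.rpow_neg hdx.le]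
      ring
    have hB : (x / s x) ^ l * deriv s x = x ^ l * ((s x) ^ (-l) * deriv s x) := by
      rw [Real.div_rpow hx0.le hsx.le, Real.rpow_neg hsx.le]
      ring
    have hBpos : 0 < (x / s x) ^ l * deriv s x :=
      mul_pos (Real.rpow_pos_of_pos (div_pos hx0 hsx) l) (sderiv_pos x hx)
    have h := helast x hx
    rw [abs_div, abs_of_pos hBpos, div_le_iff₀ hBpos] at h
    have h2 : x ^ l * |(d x) ^ (-l) * deriv d x| ≤ x ^ l * (θ * ((s x) ^ (-l) * deriv s x)) := by
      calc x ^ l * |(d x) ^ (-l) * deriv d x|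
          = |(x / d x) ^ l * deriv d x| := by
            rw [hA, abs_mul (x ^ l), abs_of_pos hxl]
        _ ≤ θ * ((x / s x) ^ l * deriv s x) := h
        _ = x ^ l * (θ * ((s x) ^ (-l) * deriv s x)) := by rw [hB]; ring
    exact le_of_mul_le_mul_left h2 hxl
  -- Lyapunov functions
  set ρ : ℝ → ℝ := if l = 1 then Real.log else fun z : ℝ => z ^ (1 - l) / (1 - l) with hρdef
  have hρ : ∀ z : ℝ, 0 < z → HasDerivAt ρ (z ^ (-l)) z := aux_rho_deriv l
  set F : ℝ → ℝ := fun x => ρ (d x) with hFdef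
  set G : ℝ → ℝ := fun x => ρ (s x) with hGdef
  have hF' : ∀ x ∈ P, HasDerivAt F ((d x) ^ (-l) * deriv d x) x := fun x hx =>
    (hρ _ (hdpos x hx)).comp x (hddiff x hx).hasDerivAt
  have hG' : ∀ x ∈ P, HasDerivAt G ((s x) ^ (-l) * deriv s x) x := fun x hx =>
    (hρ _ (hspos x hx)).comp x (hsdiff x hx).hasDerivAt
  have hG'pos : ∀ x ∈ P, 0 < (s x) ^ (-l) * deriv s x := fun x hx =>
    mul_pos (Real.rpow_pos_of_pos (hspos x hx) _) (sderiv_pos x hx)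
  -- G strictly monotone on P
  have Gmono : StrictMonoOn G P := by
    apply strictMonoOn_of_deriv_pos hconv
    · exact fun x hx => ((hG' x hx).differentiableAt).continuousAt.continuousWithinAt
    · intro x hx
      rw [interior_Ioi] at hx
      rw [(hG' x hx).deriv]
      exact hG'pos x hx
  -- contraction estimate
  have hM1 : MonotoneOn (fun x => θ * G x - F x) P := by
    apply monotoneOn_of_deriv_nonneg hconv
    · exact fun x hx =>
        (((hG' x hx).const_mul θ).sub (hF' x hx)).differentiableAt.continuousAt.continuousWithinAt
    · intro x hx
      rw [interior_Ioi] at hx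
      exact (((hG' x hx).const_mul θ).sub (hF' x hx)).differentiableAt.differentiableWithinAt
    · intro x hx
      rw [interior_Ioi] at hx
      rw [show deriv (fun x => θ * G x - F x) x = _ from (((hG' x hx).const_mul θ).sub (hF' x hx)).deriv]
      have := (abs_le.mp (hbound x hx)).2
      linarith
  have hM2 : MonotoneOn (fun x => θ * G x + F x) P := by
    apply monotoneOn_of_deriv_nonneg hconv
    · exact fun x hx =>
        (((hG' x hx).const_mul θ).add (hF' x hx)).differentiableAt.continuousAt.continuousWithinAt
    · intro x hx
      rw [interior_Ioi] at hx
      exact (((hG' x hx).const_mul θ).add (hF' x hx)).differentiableAt.differentiableWithinAt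
    · intro x hx
      rw [interior_Ioi] at hx
      rw [show deriv (fun x => θ * G x + F x) x = _ from (((hG' x hx).const_mul θ).add (hF' x hx)).deriv]
      have := (abs_le.mp (hbound x hx)).1
      linarith
  have hAux : ∀ x ∈ P, ∀ y ∈ P, y ≤ x → |F x - F y| ≤ θ * (G x - G y) := by
    intro x hx y hy hyx
    have h1 := hM1 hy hx hyx
    have h2 := hM2 hy hx hyx
    simp only at h1 h2
    apply abs_le.mpr
    constructor <;> linarith
  have hcontr : ∀ x ∈ P, ∀ y ∈ P, |F x - F y| ≤ θ * |G x - G y| := by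
    intro x hx y hy
    rcases le_total y x with h | h
    · have hGle : G y ≤ G x := Gmono.monotoneOn hy hx h
      rw [abs_of_nonneg (sub_nonneg.mpr hGle)]
      exact hAux x hx y hy h
    · have hGle : G x ≤ G y := Gmono.monotoneOn hx hy h
      rw [abs_sub_comm (F x), abs_sub_comm (G x), abs_of_nonneg (sub_nonneg.mpr hGle)]
      exact hAux y hy x hx h
  -- trajectory identity
  have key : ∀ t, s (lam (t+1)) = d (lam t) := by
    intro t
    have h1 : deriv c (s (lam (t+1))) = lam (t+1) := hsinv _ (hpos _)
    have h2 : deriv c (s (lam (t+1))) = deriv c (d (lam t)) := by rw [h1, hdyn t]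
    exact Cmono.injOn (hspos _ (hpos _)) (hdpos _ (hpos _)) h2
  -- existence of equilibrium
  obtain ⟨lamstar, hls, heq⟩ : ∃ x ∈ P, d x = s x := by
    by_contra hno
    push_neg at hno
    have hcd : ContinuousOn (fun x => d x - s x) P := fun x hx =>
      ((hddiff x hx).sub (hsdiff x hx)).continuousAt.continuousWithinAt
    have htri : (∀ x ∈ P, s x < d x) ∨ (∀ x ∈ P, d x < s x) := by
      by_contra hcon
      push_neg at hcon
      obtain ⟨⟨a, ha, ha2⟩, ⟨b, hb, hb2⟩⟩ := hcon
      have ha3 : d a < s a := lt_of_le_of_ne ha2 (hno a ha)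
      have hb3 : s b < d b := lt_of_le_of_ne hb2 fun h => (hno b hb) h.symm
      have hsub : Set.uIcc a b ⊆ P := by
        intro z hz
        rw [Set.mem_uIcc] at hz
        have ha0 : (0:ℝ) < a := ha
        have hb0 : (0:ℝ) < b := hb
        rcases hz with ⟨h1, _⟩ | ⟨h1, _⟩ <;> [exact lt_of_lt_of_le ha0 h1;
          exact lt_of_lt_of_le hb0 h1]
      have hivt := intermediate_value_uIcc (f := fun x => d x - s x) (a := a) (b := b)
        (hcd.mono hsub)
      have h0mem : (0:ℝ) ∈ Set.uIcc (d a - s a) (d b - s b) := by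
        rw [Set.mem_uIcc]
        left
        constructor <;> linarith
      obtain ⟨z, hz, hz0⟩ := hivt h0mem
      refine hno z (hsub hz) ?_
      have hz0' : d z - s z = 0 := hz0
      linarith
    rcases htri with hcase | hcase
    · have hν : max (lam 1) (lam 0) ∈ P := lt_max_of_lt_left (hpos 1)
      have : s (lam 1) < d (lam 0) :=
        calc s (lam 1) ≤ s (max (lam 1) (lam 0)) :=
              smono.monotoneOn (hpos 1) hν (le_max_left _ _)
          _ < d (max (lam 1) (lam 0)) := hcase _ hν
          _ ≤ d (lam 0) := danti.antitoneOn (hpos 0) hν (le_max_right _ _)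
      exact absurd (key 0) (ne_of_lt this)
    · have hν : min (lam 1) (lam 0) ∈ P := lt_min (hpos 1) (hpos 0)
      have : d (lam 0) < s (lam 1) :=
        calc d (lam 0) ≤ d (min (lam 1) (lam 0)) :=
              danti.antitoneOn hν (hpos 0) (min_le_right _ _)
          _ < s (min (lam 1) (lam 0)) := hcase _ hν
          _ ≤ s (lam 1) := smono.monotoneOn hν (hpos 1) (min_le_left _ _)
      exact absurd (key 0) (ne_of_gt this)
  refine ⟨lamstar, hls, heq, ?_⟩
  -- convergence of G ∘ lam
  have hFG : F lamstar = G lamstar := by simp only [hFdef, hGdef, heq]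
  have hstep : ∀ t, |G (lam (t+1)) - G lamstar| ≤ θ * |G (lam t) - G lamstar| := by
    intro t
    have h1 : G (lam (t+1)) = F (lam t) := by
      simp only [hFdef, hGdef, key t]
    have hco := hcontr (lam t) (hpos t) lamstar hls
    rw [hFG] at hco
    rwa [h1]
  have hiter : ∀ t, |G (lam t) - G lamstar| ≤ θ ^ t * |G (lam 0) - G lamstar| := by
    intro t
    induction t with
    | zero => simp
    | succ n ih =>
      calc |G (lam (n+1)) - G lamstar| ≤ θ * |G (lam n) - G lamstar| := hstep n
        _ ≤ θ * (θ ^ n * |G (lam 0) - G lamstar|) := by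
            exact mul_le_mul_of_nonneg_left ih θnonneg
        _ = θ ^ (n+1) * |G (lam 0) - G lamstar| := by ring
  have hGconv : Tendsto (fun t => G (lam t)) atTop (𝓝 (G lamstar)) := by
    rw [tendsto_iff_dist_tendsto_zero]
    have h0 : Tendsto (fun t : ℕ => θ ^ t * |G (lam 0) - G lamstar|) atTop (𝓝 0) := by
      have := (tendsto_pow_atTop_nhds_zero_of_lt_one θnonneg hθ).mul_const
        (|G (lam 0) - G lamstar|)
      simpa using this
    refine squeeze_zero (fun t => dist_nonneg) (fun t => ?_) h0
    rw [Real.dist_eq]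
    exact hiter t
  -- convergence of lam
  have hls0 : (0:ℝ) < lamstar := hls
  rw [Metric.tendsto_atTop]
  intro ε hε
  set ε' := min ε (lamstar / 2) with hε'def
  have hε' : 0 < ε' := lt_min hε (by positivity)
  have hε'2 : ε' ≤ lamstar / 2 := min_le_right _ _
  have ha : lamstar - ε' ∈ P := by
    simp only [hP, Set.mem_Ioi]
    linarith
  have hb : lamstar + ε' ∈ P := by
    simp only [hP, Set.mem_Ioi]
    linarith
  have hδ1 : G (lamstar - ε') < G lamstar := Gmono ha hls (by linarith)
  have hδ2 : G lamstar < G (lamstar + ε') := Gmono hls hb (by linarith)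
  set δ := min (G lamstar - G (lamstar - ε')) (G (lamstar + ε') - G lamstar) with hδdef
  have hδ : 0 < δ := lt_min (by linarith) (by linarith)
  obtain ⟨N, hN⟩ := Metric.tendsto_atTop.mp hGconv δ hδ
  refine ⟨N, fun t ht => ?_⟩
  have h2 := hN t ht
  rw [Real.dist_eq] at h2 ⊢
  have hlow : lamstar - ε' < lam t := by
    by_contra hcon
    push_neg at hcon
    have hG1 : G (lam t) ≤ G (lamstar - ε') := Gmono.monotoneOn (hpos t) ha hcon
    have hδle : δ ≤ G lamstar - G (lamstar - ε') := min_le_left _ _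
    have : δ ≤ |G (lam t) - G lamstar| := by
      rw [abs_of_nonpos (by linarith)]
      linarith
    linarith
  have hhigh : lam t < lamstar + ε' := by
    by_contra hcon
    push_neg at hcon
    have hG1 : G (lamstar + ε') ≤ G (lam t) := Gmono.monotoneOn hb (hpos t) hcon
    have hδle : δ ≤ G (lamstar + ε') - G lamstar := min_le_right _ _
    have : δ ≤ |G (lam t) - G lamstar| := by
      rw [abs_of_nonneg (by linarith)]
      linarith
    linarith
  have : |lam t - lamstar| < ε' := abs_lt.mpr ⟨by linarith, by linarith⟩
  exact lt_of_lt_of_le this (min_le_left _ _)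
end
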